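/- arXiv:2408.06282 — 12 statements merged into one kernel-verified Lean document; each statement's English description precedes it below -/
import Mathlib

section
/- Let C be an almost MDS code over F_q with parameters [n, k, n-k]. Then for every subset I ⊆ {1, ..., n} with |I| = n-k+1, the dimension of the subspace C(I) of codewords with support contained in I is either 1 or 2. -/
open Finset

/-- The submodule of vectors supported in a finset `I`. -/
def suppCode (F : Type*) [Field F] (n : ℕ) (I : Finset (Fin n)) :
    Submodule F (Fin n → F) where
  carrier := {c | ∀ i, i ∉ I → c i = 0}
  add_mem' := by
    intro a b ha hb i hi
    simp [ha i hi, hb i hi]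
  zero_mem' := by
    intro i _
    rfl
  smul_mem' := by
    intro r a ha i hi
    simp [ha i hi]

/-- `C` is an `[n, k, n-k]` almost MDS code. -/
def IsAMDS (F : Type*) [Field F] [DecidableEq F] (n k : ℕ)
    (C : Submodule F (Fin n → F)) : Prop :=
  Module.finrank F C = k ∧
  (∀ c ∈ C, c ≠ 0 → n - k ≤ hammingNorm c) ∧
  (∃ c ∈ C, c ≠ 0 ∧ hammingNorm c = n - k)

/-- The Euclidean dual code. -/
def dualCode {F : Type*} [Field F] {n : ℕ} (C : Submodule F (Fin n → F)) :
    Submodule F (Fin n → F) where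
  carrier := {x | ∀ c ∈ C, ∑ i, x i * c i = 0}
  add_mem' := by
    intro a b ha hb c hc
    simp [Pi.add_apply, add_mul, Finset.sum_add_distrib, ha c hc, hb c hc]
  zero_mem' := by
    intro c _
    simp
  smul_mem' := by
    intro r a ha c hc
    simp [Pi.smul_apply, smul_eq_mul, mul_assoc, ← Finset.mul_sum, ha c hc]

/-- for an AMDS `[n,k,n-k]` code, the subcode supported in any
`(n-k+1)`-subset has dimension `1` or `2`. -/
theorem stmt3 {F : Type*} [Field F] [Fintype F] [DecidableEq F] {n k : ℕ}
    (C : Submodule F (Fin n → F)) (hC : IsAMDS F n k C)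
    (I : Finset (Fin n)) (hI : I.card = n - k + 1) :
    Module.finrank F ↥(C ⊓ suppCode F n I) = 1 ∨
    Module.finrank F ↥(C ⊓ suppCode F n I) = 2 := by
  obtain ⟨hk, hmin, c₀, hc₀C, hc₀ne, hc₀w⟩ := hC
  -- basic numerics
  have hdpos : 1 ≤ n - k := by
    rcases Nat.eq_zero_or_pos (n - k) with h | h
    · exfalso; apply hc₀ne; rw [← hammingNorm_eq_zero]; omega
    · exact h
  have hkn : k ≤ n := by
    have := Submodule.finrank_le C
    simpa [hk, Module.finrank_pi] using this
  have hkpos : 1 ≤ k := by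
    rw [← hk]
    have : Nontrivial ↥C := ⟨⟨c₀, hc₀C⟩, 0, by simpa [Subtype.ext_iff] using hc₀ne⟩
    exact Module.finrank_pos
  set D := C ⊓ suppCode F n I with hD
  -- lower bound
  have hlow : 1 ≤ Module.finrank F ↥D := by
    set π : ↥C →ₗ[F] (↥(Iᶜ : Finset (Fin n)) → F) :=
      (LinearMap.funLeft F F (fun j : ↥(Iᶜ : Finset (Fin n)) => (j : Fin n))).comp C.subtype with hπ
    have hker : Module.finrank F ↥(LinearMap.ker π) = Module.finrank F ↥D := by
      refine LinearEquiv.finrank_eq ?_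
      refine
        { toFun := fun x => ⟨x.1.1, x.1.2, fun i hi =>
            congrFun x.2 ⟨i, Finset.mem_compl.mpr hi⟩⟩
          invFun := fun y => ⟨⟨y.1, y.2.1⟩, funext fun j =>
            y.2.2 j.1 (Finset.mem_compl.mp j.2)⟩
          map_add' := fun _ _ => rfl
          map_smul' := fun _ _ => rfl
          left_inv := fun _ => rfl
          right_inv := fun _ => rfl }
    have hrn := LinearMap.finrank_range_add_finrank_ker π
    have hrange : Module.finrank F ↥(LinearMap.range π) ≤ n - I.card := by
      have h1 := Submodule.finrank_le (LinearMap.range π)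
      have h2 : Module.finrank F (↥(Iᶜ : Finset (Fin n)) → F) = n - I.card := by
        simp [Module.finrank_pi, Finset.card_compl]
      omega
    rw [hk] at hrn
    omega
  -- upper bound
  have hIcard2 : 2 ≤ I.card := by omega
  obtain ⟨a, ha, b, hb, hab⟩ := Finset.one_lt_card.mp hIcard2
  have hupp : Module.finrank F ↥D ≤ 2 := by
    set φ : ↥D →ₗ[F] (F × F) :=
      { toFun := fun c => (c.1 a, c.1 b)
        map_add' := fun _ _ => rfl
        map_smul' := fun _ _ => rfl } with hφ
    have hinj : Function.Injective φ := by
      rw [← LinearMap.ker_eq_bot]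
      rw [LinearMap.ker_eq_bot']
      rintro ⟨c, hcC, hcI⟩ hc0
      have hca : c a = 0 := congrArg Prod.fst hc0
      have hcb : c b = 0 := congrArg Prod.snd hc0
      ext1
      by_contra hc
      have hcne : c ≠ 0 := by simpa [Subtype.ext_iff] using hc
      have h1 := hmin c hcC hcne
      have hsub : ({i | c i ≠ 0} : Finset (Fin n)) ⊆ (I.erase a).erase b := by
        intro i hi
        simp only [Finset.mem_filter, Finset.mem_univ, true_and] at hi
        have hiI : i ∈ I := by by_contra h; exact hi (hcI i h)
        refine Finset.mem_erase.mpr ⟨?_, Finset.mem_erase.mpr ⟨?_, hiI⟩⟩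
        · rintro rfl; exact hi hcb
        · rintro rfl; exact hi hca
      have hcard : hammingNorm c ≤ I.card - 2 := by
        have := Finset.card_le_card hsub
        have hbe : b ∈ I.erase a := Finset.mem_erase.mpr ⟨fun h => hab (h ▸ rfl), hb⟩
        rw [Finset.card_erase_of_mem hbe, Finset.card_erase_of_mem ha] at this
        calc hammingNorm c ≤ I.card - 1 - 1 := this
        _ = I.card - 2 := by omega
      omega
    have := LinearMap.finrank_le_finrank_of_injective hinj
    simpa using this
  omega
end

section
/- Let C be an almost MDS code over F_q with parameters [n, k, n-k]. If C is a near MDS code (i.e., its dual code is also AMDS with minimum distance k), then k·A_{n-k} + A_{n-k+1} = (q-1)·binomial(n, n-k+1), where A_i denotes the number of codewords of C of Hamming weight i. -/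
open Finset

open Module

section Aux

variable {F : Type*} [Field F] {n : ℕ}

/-- dot product bilinear form -/
def dotB (F : Type*) [Field F] (n : ℕ) : LinearMap.BilinForm F (Fin n → F) :=
  LinearMap.mk₂ F (fun x y => ∑ i, x i * y i)
    (fun x y z => by simp [add_mul, Finset.sum_add_distrib])
    (fun c x y => by
      simp only [Pi.smul_apply, smul_eq_mul, Finset.mul_sum, mul_assoc])
    (fun x y z => by simp [mul_add, Finset.sum_add_distrib])
    (fun c x y => by
      simp only [Pi.smul_apply, smul_eq_mul, Finset.mul_sum]
      exact Finset.sum_congr rfl fun i _ => by ring)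

@[simp] lemma dotB_apply (x y : Fin n → F) : dotB F n x y = ∑ i, x i * y i := rfl

lemma dotB_nondegenerate : (dotB F n).Nondegenerate := by
  constructor <;> intro x hx <;> funext i <;> have := hx (Pi.single i 1) <;>
  simpa [Pi.single_apply, mul_ite, ite_mul, Finset.sum_ite_eq'] using this

lemma dotB_isRefl : (dotB F n).IsRefl := by
  intro x y h
  rw [dotB_apply] at h ⊢
  rw [← h]
  exact Finset.sum_congr rfl fun i _ => mul_comm _ _

lemma dualCode_eq_orthogonal (W : Submodule F (Fin n → F)) :
    dualCode W = (dotB F n).orthogonal W := by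
  ext x
  show (∀ c ∈ W, ∑ i, x i * c i = 0) ↔ ∀ c ∈ W, (dotB F n).IsOrtho c x
  refine forall₂_congr fun c hc => ?_
  rw [LinearMap.BilinForm.isOrtho_def, dotB_apply]
  constructor <;> intro h <;> rw [← h] <;>
    exact Finset.sum_congr rfl fun i _ => mul_comm _ _

lemma finrank_dualCode (W : Submodule F (Fin n → F)) :
    finrank F (dualCode W) = n - finrank F W := by
  rw [dualCode_eq_orthogonal, LinearMap.BilinForm.finrank_orthogonal
    dotB_nondegenerate W, Module.finrank_fin_fun]

lemma finrank_suppCode (I : Finset (Fin n)) : finrank F (suppCode F n I) = I.card := by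
  classical
  let e : suppCode F n I ≃ₗ[F] (I → F) :=
    { toFun := fun c i => c.1 i
      map_add' := fun a b => rfl
      map_smul' := fun r a => rfl
      invFun := fun f => ⟨fun i => if h : i ∈ I then f ⟨i, h⟩ else 0, fun i hi => dif_neg hi⟩
      left_inv := fun c => Subtype.ext (funext fun i => by
        by_cases h : i ∈ I
        · simp [h]
        · simp [h, c.2 i h])
      right_inv := fun f => funext fun i => by simp }
  rw [e.finrank_eq, Module.finrank_pi, Fintype.card_coe]

lemma hammingNorm_le_of_supp [DecidableEq F] {x : Fin n → F} {J : Finset (Fin n)}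
    (h : ∀ i ∉ J, x i = 0) : hammingNorm x ≤ J.card := by
  refine Finset.card_le_card fun i hi => ?_
  simp only [hammingNorm, Finset.mem_filter, Finset.mem_univ, true_and] at hi
  by_contra hiJ
  exact hi (h i hiJ)

/-- projection onto coordinates in `J` -/
def projOn (F : Type*) [Field F] {n : ℕ} (J : Finset (Fin n)) [DecidableEq (Fin n)] :
    (Fin n → F) →ₗ[F] (Fin n → F) where
  toFun c i := if i ∈ J then c i else 0
  map_add' a b := funext fun i => by by_cases h : i ∈ J <;> simp [h]
  map_smul' r a := funext fun i => by by_cases h : i ∈ J <;> simp [h]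

@[simp] lemma projOn_apply (J : Finset (Fin n)) (c : Fin n → F) (i : Fin n) :
    projOn F J c i = if i ∈ J then c i else 0 := rfl

end Aux

section Key

variable {F : Type*} [Field F] {n k : ℕ}

set_option synthInstance.maxHeartbeats 400000 in
lemma key_finrank (C : Submodule F (Fin n → F)) [DecidableEq F]
    (hCk : finrank F C = k)
    (hdd : ∀ x ∈ dualCode C, x ≠ 0 → k ≤ hammingNorm x)
    (hk1 : 1 ≤ k) (hkn : k ≤ n)
    (I : Finset (Fin n)) (hI : I.card = n - k + 1) :
    finrank F ↥(C ⊓ suppCode F n I) = 1 := by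
  classical
  set J : Finset (Fin n) := Iᶜ with hJdef
  have hIn : I.card ≤ n := by
    simpa using Finset.card_le_card (Finset.subset_univ I)
  have hJ : J.card = k - 1 := by
    rw [hJdef, Finset.card_compl, Fintype.card_fin, hI]
    omega
  set W : Submodule F (Fin n → F) := C.map (projOn F J) with hWdef
  have hWle : W ≤ suppCode F n J := by
    rintro w ⟨c, hc, rfl⟩ i hi
    simp [hi]
  have hWcard : finrank F W = J.card := by
    refine le_antisymm ?_ ?_
    · rw [← finrank_suppCode (F := F) J]
      exact Submodule.finrank_mono hWle
    by_contra hlt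
    push_neg at hlt
    have hsum := Submodule.finrank_sup_add_finrank_inf_eq (dualCode W) (suppCode F n J)
    have h1 : finrank F (dualCode W) = n - finrank F W := finrank_dualCode W
    have h2 : finrank F ↥(dualCode W ⊔ suppCode F n J) ≤ n := by
      have := Submodule.finrank_le (dualCode W ⊔ suppCode F n J)
      rwa [Module.finrank_fin_fun] at this
    have hWn : finrank F W ≤ n := by
      have := Submodule.finrank_le W
      rwa [Module.finrank_fin_fun] at this
    have hsupp := finrank_suppCode (F := F) J
    have hJn : J.card ≤ n := by
      simpa using Finset.card_le_card (Finset.subset_univ J)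
    have h3 : 1 ≤ finrank F ↥(dualCode W ⊓ suppCode F n J) := by omega
    obtain ⟨x, hx, hxne⟩ : ∃ x ∈ dualCode W ⊓ suppCode F n J, x ≠ 0 := by
      rw [← Submodule.ne_bot_iff]
      intro hbot
      rw [hbot, finrank_bot] at h3
      omega
    obtain ⟨hx1, hx2⟩ := Submodule.mem_inf.1 hx
    have hxC : x ∈ dualCode C := by
      intro c hc
      have heq : ∑ i, x i * c i = ∑ i, x i * (projOn F J c) i := by
        refine Finset.sum_congr rfl fun i _ => ?_
        by_cases h : i ∈ J
        · simp [h]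
        · rw [hx2 i h]; ring
      rw [heq]
      exact hx1 _ (Submodule.mem_map_of_mem hc)
    have hk := hdd x hxC hxne
    have hle := hammingNorm_le_of_supp (fun i hi => hx2 i hi)
    omega
  let f : ↥C →ₗ[F] (Fin n → F) := (projOn F J) ∘ₗ C.subtype
  have hker : LinearMap.ker f = Submodule.comap C.subtype (C ⊓ suppCode F n I) := by
    ext ⟨c, hc⟩
    simp only [LinearMap.mem_ker, Submodule.mem_comap, Submodule.mem_inf,
      Submodule.coe_subtype, LinearMap.comp_apply, f]
    constructor
    · intro h
      refine ⟨hc, fun i hiI => ?_⟩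
      have := congrFun h i
      have hiJ : i ∈ J := by simpa [hJdef] using hiI
      simpa [hiJ] using this
    · rintro ⟨-, h⟩
      funext i
      by_cases hiJ : i ∈ J
      · have hiI : i ∉ I := by simpa [hJdef] using hiJ
        simp [hiJ, h i hiI]
      · simp [hiJ]
  have hrange : LinearMap.range f = W := by
    rw [hWdef]
    show LinearMap.range ((projOn F J) ∘ₗ C.subtype) = _
    rw [LinearMap.range_comp, Submodule.range_subtype]
  have hrn := LinearMap.finrank_range_add_finrank_ker f
  have hcomap : finrank F ↥(Submodule.comap C.subtype (C ⊓ suppCode F n I)) =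
      finrank F ↥(C ⊓ suppCode F n I) :=
    (Submodule.comapSubtypeEquivOfLe (inf_le_left : C ⊓ suppCode F n I ≤ C)).finrank_eq
  rw [hrange, hker, hWcard, hJ, hcomap, hCk] at hrn
  omega

end Key

section Count

variable {F : Type*} [Field F] [Fintype F] [DecidableEq F] {n k : ℕ}

lemma card_supersets {s : Finset (Fin n)} {m : ℕ} (hs : s.card ≤ m) :
    (((univ : Finset (Fin n)).powersetCard m).filter fun I => s ⊆ I).card =
      (n - s.card).choose (m - s.card) := by
  classical
  have h2 : (sᶜ.powersetCard (m - s.card)).card = (n - s.card).choose (m - s.card) := by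
    rw [Finset.card_powersetCard, Finset.card_compl, Fintype.card_fin]
  rw [← h2]
  refine Finset.card_bij' (fun I _ => I \ s) (fun t _ => t ∪ s) ?_ ?_ ?_ ?_
  · intro I hI
    simp only [Finset.mem_filter, Finset.mem_powersetCard] at hI
    obtain ⟨⟨-, hcard⟩, hsub⟩ := hI
    rw [Finset.mem_powersetCard]
    constructor
    · intro i hi
      simp only [Finset.mem_sdiff] at hi
      simpa using hi.2
    · rw [Finset.card_sdiff_of_subset hsub, hcard]
  · intro t ht
    rw [Finset.mem_powersetCard] at ht
    obtain ⟨hsub, hcard⟩ := ht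
    have hdisj : Disjoint t s := by
      rw [Finset.disjoint_right]
      intro i hi
      have := hsub
      intro hit
      have := hsub hit
      simp only [Finset.mem_compl] at this
      exact this hi
    simp only [Finset.mem_filter, Finset.mem_powersetCard]
    refine ⟨⟨Finset.subset_univ _, ?_⟩, Finset.subset_union_right⟩
    rw [Finset.card_union_of_disjoint hdisj, hcard]
    omega
  · intro I hI
    simp only [Finset.mem_filter] at hI
    exact Finset.sdiff_union_of_subset hI.2
  · intro t ht
    rw [Finset.mem_powersetCard] at ht
    have hdisj : Disjoint t s := by
      rw [Finset.disjoint_right]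
      intro i hi hit
      have := ht.1 hit
      simp only [Finset.mem_compl] at this
      exact this hi
    exact Finset.union_sdiff_cancel_right hdisj

lemma card_nonzero_inf (C : Submodule F (Fin n → F)) (I : Finset (Fin n))
    [DecidablePred fun c : Fin n → F => c ∈ C ∧ c ≠ 0 ∧ ∀ i ∉ I, c i = 0]
    (hD : finrank F ↥(C ⊓ suppCode F n I) = 1) :
    ((univ : Finset (Fin n → F)).filter
      fun c => c ∈ C ∧ c ≠ 0 ∧ ∀ i ∉ I, c i = 0).card = Fintype.card F - 1 := by
  classical
  set D := C ⊓ suppCode F n I with hDdef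
  have hpred : ∀ c : Fin n → F, (c ∈ C ∧ c ≠ 0 ∧ ∀ i ∉ I, c i = 0) ↔ (c ∈ D ∧ c ≠ 0) := by
    intro c
    rw [hDdef, Submodule.mem_inf]
    have : c ∈ suppCode F n I ↔ ∀ i ∉ I, c i = 0 := Iff.rfl
    tauto
  have hset : ((univ : Finset (Fin n → F)).filter
      fun c => c ∈ C ∧ c ≠ 0 ∧ ∀ i ∉ I, c i = 0) =
      ((univ : Finset (Fin n → F)).filter fun c => c ∈ D).erase 0 := by
    ext c
    simp only [Finset.mem_filter, Finset.mem_univ, true_and, Finset.mem_erase]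
    rw [hpred c]
    tauto
  rw [hset, Finset.card_erase_of_mem (by simp [D.zero_mem])]
  have hq : ((univ : Finset (Fin n → F)).filter fun c => c ∈ D).card = Fintype.card F := by
    calc ((univ : Finset (Fin n → F)).filter fun c => c ∈ D).card
        = Fintype.card {c : Fin n → F // c ∈ D} := (Fintype.card_subtype _).symm
      _ = Fintype.card ↥D := Fintype.card_congr (Equiv.refl _)
      _ = Fintype.card F ^ finrank F ↥D := card_eq_pow_finrank
      _ = Fintype.card F := by rw [hD, pow_one]
  rw [hq]

end Count

set_option maxHeartbeats 1000000 in
/-- if an AMDS `[n,k,n-k]` code is near MDS then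
`k·A_{n-k} + A_{n-k+1} = (q-1)·C(n, n-k+1)`. -/
theorem stmt4 {F : Type*} [Field F] [Fintype F] [DecidableEq F] {n k : ℕ}
    (C : Submodule F (Fin n → F)) (hC : IsAMDS F n k C) (hkn : k ≤ n)
    (hdual : IsAMDS F n (n - k) (dualCode C)) :
    k * {c ∈ (C : Set (Fin n → F)) | hammingNorm c = n - k}.ncard +
      {c ∈ (C : Set (Fin n → F)) | hammingNorm c = n - k + 1}.ncard =
    (Fintype.card F - 1) * n.choose (n - k + 1) := by
  classical
  obtain ⟨hCk, hCd, hCex⟩ := hC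
  obtain ⟨hDk, hDd, hDex⟩ := hdual
  have hk1 : 1 ≤ k := by
    obtain ⟨x, hx, hxne, hxw⟩ := hDex
    have hpos : 0 < hammingNorm x := hammingNorm_pos_iff.2 hxne
    omega
  have hkltn : k < n := by
    obtain ⟨c, hc, hcne, hcw⟩ := hCex
    have hpos : 0 < hammingNorm c := hammingNorm_pos_iff.2 hcne
    omega
  have hdd : ∀ x ∈ dualCode C, x ≠ 0 → k ≤ hammingNorm x := by
    intro x hx hxne
    have := hDd x hx hxne
    omega
  set m := n - k + 1 with hm
  set P := (univ : Finset (Fin n)).powersetCard m with hP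
  -- evaluation of each term of the double count
  have hterm : ∀ I ∈ P, ((univ : Finset (Fin n → F)).filter
      fun c => c ∈ C ∧ c ≠ 0 ∧ ∀ i ∉ I, c i = 0).card = Fintype.card F - 1 := by
    intro I hI
    have hIcard : I.card = n - k + 1 := by
      rw [hP, Finset.mem_powersetCard] at hI; exact hI.2
    exact card_nonzero_inf C I (key_finrank C hCk hdd hk1 hkn I hIcard)
  have hS1 : (∑ I ∈ P, ((univ : Finset (Fin n → F)).filter
      fun c => c ∈ C ∧ c ≠ 0 ∧ ∀ i ∉ I, c i = 0).card) =
      (Fintype.card F - 1) * n.choose m := by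
    rw [Finset.sum_congr rfl hterm, Finset.sum_const, smul_eq_mul, hP,
      Finset.card_powersetCard, Finset.card_univ, Fintype.card_fin, mul_comm]
  -- swap the double count
  have hswap : (∑ I ∈ P, ((univ : Finset (Fin n → F)).filter
      fun c => c ∈ C ∧ c ≠ 0 ∧ ∀ i ∉ I, c i = 0).card) =
      ∑ c ∈ (univ : Finset (Fin n → F)).filter (fun c => c ∈ C ∧ c ≠ 0),
        (P.filter fun I => ∀ i ∉ I, c i = 0).card := by
    calc (∑ I ∈ P, ((univ : Finset (Fin n → F)).filter
          fun c => c ∈ C ∧ c ≠ 0 ∧ ∀ i ∉ I, c i = 0).card)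
        = ∑ I ∈ P, ∑ c : Fin n → F,
            (if c ∈ C ∧ c ≠ 0 ∧ ∀ i ∉ I, c i = 0 then 1 else 0) := by
          refine Finset.sum_congr rfl fun I _ => ?_
          rw [Finset.sum_boole, Nat.cast_id]
      _ = ∑ c : Fin n → F, ∑ I ∈ P,
            (if c ∈ C ∧ c ≠ 0 ∧ ∀ i ∉ I, c i = 0 then 1 else 0) := Finset.sum_comm
      _ = ∑ c ∈ (univ : Finset (Fin n → F)).filter (fun c => c ∈ C ∧ c ≠ 0),
            (P.filter fun I => ∀ i ∉ I, c i = 0).card := by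
          rw [Finset.sum_filter]
          refine Finset.sum_congr rfl fun c _ => ?_
          by_cases hc : c ∈ C ∧ c ≠ 0
          · rw [if_pos hc]
            simp only [hc.1, hc.2, ne_eq, not_false_eq_true, true_and]
            rw [Finset.sum_boole, Nat.cast_id]
          · rw [if_neg hc]
            refine Finset.sum_eq_zero fun I _ => ?_
            rw [if_neg]
            tauto
  -- count supersets for each codeword
  have hcount : ∀ c : Fin n → F, c ∈ C → c ≠ 0 →
      (P.filter fun I => ∀ i ∉ I, c i = 0).card =
        (if hammingNorm c = n - k then k else if hammingNorm c = m then 1 else 0) := by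
    intro c hc hcne
    clear hterm hS1 hswap hCex hDex
    set s := (univ : Finset (Fin n)).filter (fun i => c i ≠ 0) with hs
    have hnorm : hammingNorm c = s.card := rfl
    have hcond : ∀ I : Finset (Fin n), (∀ i ∉ I, c i = 0) ↔ s ⊆ I := by
      intro I
      constructor
      · intro h i hi
        rw [hs, Finset.mem_filter] at hi
        by_contra hiI
        exact hi.2 (h i hiI)
      · intro h i hiI
        by_contra hci
        exact hiI (h (by rw [hs, Finset.mem_filter]; exact ⟨Finset.mem_univ i, hci⟩))
    have hfilter : P.filter (fun I => ∀ i ∉ I, c i = 0) = P.filter (fun I => s ⊆ I) := by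
      ext I
      simp only [Finset.mem_filter]
      rw [hcond I]
    rw [hfilter]
    have hge : n - k ≤ hammingNorm c := hCd c hc hcne
    by_cases h1 : hammingNorm c = n - k
    · rw [if_pos h1]
      have hsc : s.card ≤ m := by omega
      rw [hP, card_supersets hsc, ← hnorm, h1]
      have e1 : n - (n - k) = k := by omega
      have e2 : m - (n - k) = 1 := by omega
      rw [e1, e2, Nat.choose_one_right]
    · by_cases h2 : hammingNorm c = m
      · rw [if_neg h1, if_pos h2]
        have hsc : s.card ≤ m := by omega
        rw [hP, card_supersets hsc, ← hnorm, h2]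
        simp
      · rw [if_neg h1, if_neg h2]
        have hgt : m < s.card := by omega
        rw [Finset.card_eq_zero, Finset.filter_eq_empty_iff]
        intro I hI
        rw [hP, Finset.mem_powersetCard] at hI
        intro hsub
        have := Finset.card_le_card hsub
        omega
  -- split the sum by weight
  have hS2 : (∑ c ∈ (univ : Finset (Fin n → F)).filter (fun c => c ∈ C ∧ c ≠ 0),
        (P.filter fun I => ∀ i ∉ I, c i = 0).card) =
      k * ((univ : Finset (Fin n → F)).filter
          (fun c => c ∈ C ∧ hammingNorm c = n - k)).card +
        ((univ : Finset (Fin n → F)).filter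
          (fun c => c ∈ C ∧ hammingNorm c = m)).card := by
    have hstep : (∑ c ∈ (univ : Finset (Fin n → F)).filter (fun c => c ∈ C ∧ c ≠ 0),
        (P.filter fun I => ∀ i ∉ I, c i = 0).card) =
        ∑ c ∈ (univ : Finset (Fin n → F)).filter (fun c => c ∈ C ∧ c ≠ 0),
          (if hammingNorm c = n - k then k else if hammingNorm c = m then 1 else 0) :=
      Finset.sum_congr rfl (fun c hcm => by
        rw [Finset.mem_filter] at hcm
        exact hcount c hcm.2.1 hcm.2.2)
    rw [hstep]
    rw [Finset.sum_ite, Finset.sum_const, Finset.sum_ite, Finset.sum_const,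
      Finset.sum_const_zero, add_zero, smul_eq_mul, smul_eq_mul, mul_one]
    have he1 : ((univ : Finset (Fin n → F)).filter (fun c => c ∈ C ∧ c ≠ 0)).filter
        (fun c => hammingNorm c = n - k) =
        (univ : Finset (Fin n → F)).filter (fun c => c ∈ C ∧ hammingNorm c = n - k) := by
      clear hstep hswap hterm hS1 hcount hCex hDex
      ext c
      simp only [Finset.mem_filter, Finset.mem_univ, true_and]
      constructor
      · rintro ⟨⟨h1, -⟩, h3⟩; exact ⟨h1, h3⟩
      · rintro ⟨h1, h3⟩
        refine ⟨⟨h1, fun h0 => ?_⟩, h3⟩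
        rw [h0, hammingNorm_zero] at h3
        omega
    have he2 : (((univ : Finset (Fin n → F)).filter (fun c => c ∈ C ∧ c ≠ 0)).filter
        (fun c => ¬hammingNorm c = n - k)).filter (fun c => hammingNorm c = m) =
        (univ : Finset (Fin n → F)).filter (fun c => c ∈ C ∧ hammingNorm c = m) := by
      clear hstep hswap hterm hS1 hcount hCex hDex
      ext c
      simp only [Finset.mem_filter, Finset.mem_univ, true_and]
      constructor
      · rintro ⟨⟨⟨h1, -⟩, -⟩, h4⟩; exact ⟨h1, h4⟩
      · rintro ⟨h1, h4⟩
        refine ⟨⟨⟨h1, fun h0 => ?_⟩, fun hne => ?_⟩, h4⟩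
        · rw [h0, hammingNorm_zero] at h4
          omega
        · omega
    rw [he1, he2, mul_comm]
  -- translate ncard to filter cards
  have hA : ∀ w : ℕ, {c ∈ (C : Set (Fin n → F)) | hammingNorm c = w}.ncard =
      ((univ : Finset (Fin n → F)).filter fun c => c ∈ C ∧ hammingNorm c = w).card := by
    intro w
    have hset : {c ∈ (C : Set (Fin n → F)) | hammingNorm c = w} =
        ↑((univ : Finset (Fin n → F)).filter fun c => c ∈ C ∧ hammingNorm c = w) := by
      ext c
      simp [Set.mem_sep_iff]
    rw [hset, Set.ncard_coe_finset]
  rw [hA, hA]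
  calc k * ((univ : Finset (Fin n → F)).filter
        (fun c => c ∈ C ∧ hammingNorm c = n - k)).card +
      ((univ : Finset (Fin n → F)).filter
        (fun c => c ∈ C ∧ hammingNorm c = m)).card
      = ∑ c ∈ (univ : Finset (Fin n → F)).filter (fun c => c ∈ C ∧ c ≠ 0),
          (P.filter fun I => ∀ i ∉ I, c i = 0).card := hS2.symm
    _ = ∑ I ∈ P, ((univ : Finset (Fin n → F)).filter
          fun c => c ∈ C ∧ c ≠ 0 ∧ ∀ i ∉ I, c i = 0).card := hswap.symm
    _ = (Fintype.card F - 1) * n.choose m := hS1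
end

section
/- Let q = 3^m with m a positive integer, and let U_{q+1} ⊆ F_{q^2}^× be the group of (q+1)-th roots of unity. For x, y ∈ U_{q+1}, one has x + y + xy = 0 if and only if x + y + 1 = 0, and either condition holds if and only if x = y = 1. -/
/-- for `x, y` in the group of `(q+1)`-th roots of unity of `F_{q^2}`,
`q = 3^m`: `x+y+xy = 0 ↔ x+y+1 = 0 ↔ (x = 1 ∧ y = 1)`. -/
theorem stmt8 {E : Type*} [Field E] [Fintype E] (m : ℕ) (hm : 0 < m)
    (hE : Fintype.card E = (3 ^ m) ^ 2)
    (x y : E) (hx : x ^ (3 ^ m + 1) = 1) (hy : y ^ (3 ^ m + 1) = 1) :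
    (x + y + x * y = 0 ↔ x + y + 1 = 0) ∧
    (x + y + 1 = 0 ↔ (x = 1 ∧ y = 1)) := by
  set q : ℕ := 3 ^ m with hq
  -- characteristic 3
  have hring : ringChar E = 3 := by
    obtain ⟨n, hp, h⟩ := FiniteField.card E (ringChar E)
    have hdvd : ringChar E ∣ (3 ^ m) ^ 2 := by
      have hd : ringChar E ∣ Fintype.card E := h ▸ dvd_pow_self _ (by positivity : (0:ℕ) < (n:ℕ)).ne'
      rwa [hE] at hd
    have h3 : ringChar E ∣ 3 := hp.dvd_of_dvd_pow (hp.dvd_of_dvd_pow hdvd)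
    exact (Nat.prime_dvd_prime_iff_eq hp (by norm_num)).mp h3
  haveI : CharP E 3 := hring ▸ ringChar.charP E
  haveI : ExpChar E 3 := ExpChar.prime (by norm_num)
  have h3z : (3 : E) = 0 := by exact_mod_cast CharP.cast_eq_zero E 3
  have hx0 : x ≠ 0 := by
    intro h; rw [h, zero_pow (by positivity)] at hx; exact zero_ne_one hx
  have hy0 : y ≠ 0 := by
    intro h; rw [h, zero_pow (by positivity)] at hy; exact zero_ne_one hy
  have hxq : x ^ q = x⁻¹ := by
    have : x ^ q * x = 1 := by rw [← pow_succ]; exact hx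
    exact eq_inv_of_mul_eq_one_left this
  have hyq : y ^ q = y⁻¹ := by
    have : y ^ q * y = 1 := by rw [← pow_succ]; exact hy
    exact eq_inv_of_mul_eq_one_left this
  -- Frobenius transfer
  have frob : ∀ a b : E, (a + b) ^ q = a ^ q + b ^ q := fun a b =>
    add_pow_char_pow (p := 3) (n := m) (x := a) (y := b)
  -- forward: x+y+xy=0 → x+y+1=0
  have dir1 : x + y + x * y = 0 → x + y + 1 = 0 := by
    intro h
    have h' : (x + y + x * y) ^ q = 0 := by rw [h, zero_pow]; positivity
    rw [frob, frob, mul_pow, hxq, hyq] at h'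
    have h'' : (x⁻¹ + y⁻¹ + x⁻¹ * y⁻¹) * (x * y) = 0 := by rw [h']; ring
    field_simp at h''
    linear_combination h''
  have dir2 : x + y + 1 = 0 → x + y + x * y = 0 := by
    intro h
    have h' : (x + y + 1) ^ q = 0 := by rw [h, zero_pow]; positivity
    rw [frob, frob, one_pow, hxq, hyq] at h'
    have h'' : (x⁻¹ + y⁻¹ + 1) * (x * y) = 0 := by rw [h']; ring
    field_simp at h''
    linear_combination h''
  refine ⟨⟨dir1, dir2⟩, ?_, ?_⟩
  · intro h
    have h2 := dir2 h
    have hxy1 : x * y = 1 := by linear_combination h2 - h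
    have hyx : y = x⁻¹ := eq_inv_of_mul_eq_one_left (by linear_combination hxy1)
    have hx2 : x ^ 2 + x + 1 = 0 := by
      have := congrArg (· * x) h
      rw [hyx] at this
      field_simp at this
      linear_combination this
    have : (x - 1) ^ 2 = 0 := by linear_combination hx2 - x * h3z
    have hx1 : x = 1 := by
      have := pow_eq_zero_iff (n := 2) (by norm_num) |>.mp this
      linear_combination this
    refine ⟨hx1, ?_⟩
    rw [hyx, hx1, inv_one]
  · rintro ⟨rfl, rfl⟩
    linear_combination h3z
end

section
/- Let q = 3^m with m a positive integer and let U_{q+1} be the group of (q+1)-th roots of unity in F_{q^2}. If x, y ∈ U_{q+1} are distinct, or if x, y ∈ U_{q+1}\{1}, then x + y + xy ≠ 0 and x + y + 1 ≠ 0. -/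
/-- if `x, y ∈ U_{q+1}` are distinct, or both differ from `1`,
then `x+y+xy ≠ 0` and `x+y+1 ≠ 0`. -/
theorem stmt9 {E : Type*} [Field E] [Fintype E] (m : ℕ) (hm : 0 < m)
    (hE : Fintype.card E = (3 ^ m) ^ 2)
    (x y : E) (hx : x ^ (3 ^ m + 1) = 1) (hy : y ^ (3 ^ m + 1) = 1)
    (h : x ≠ y ∨ (x ≠ 1 ∧ y ≠ 1)) :
    x + y + x * y ≠ 0 ∧ x + y + 1 ≠ 0 := by
  have h3 : (3 : E) = 0 := by
    have hc : ((Fintype.card E : ℕ) : E) = 0 := FiniteField.cast_card_eq_zero E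
    rw [hE] at hc
    push_cast at hc
    have h1 : (3 : E) ^ m = 0 := pow_eq_zero_iff two_ne_zero |>.mp hc
    exact pow_eq_zero_iff hm.ne' |>.mp h1
  haveI : Fact (Nat.Prime 3) := ⟨by norm_num⟩
  haveI hchar : CharP E 3 := by
    have := CharP.ringChar_of_prime_eq_zero (by norm_num) h3
    rw [← this]; exact ringChar.charP E
  have hq0 : (3 : ℕ) ^ m ≠ 0 := by positivity
  have hx0 : x ≠ 0 := by
    intro h0; rw [h0, zero_pow (by positivity)] at hx; exact one_ne_zero hx.symm
  have hy0 : y ≠ 0 := by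
    intro h0; rw [h0, zero_pow (by positivity)] at hy; exact one_ne_zero hy.symm
  rw [pow_succ] at hx hy
  have hxi : x ^ (3 ^ m) = x⁻¹ := eq_inv_of_mul_eq_one_left hx
  have hyi : y ^ (3 ^ m) = y⁻¹ := eq_inv_of_mul_eq_one_left hy
  have frob : ∀ a b : E, (a + b) ^ (3 ^ m) = a ^ (3 ^ m) + b ^ (3 ^ m) := by
    intro a b; exact add_pow_char_pow a b 3 m
  have contra : ¬ (x + y + 1 = 0 ∧ x + y + x * y = 0) := by
    rintro ⟨h1, h2⟩
    have hxy : x * y = 1 := by linear_combination h2 - h1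
    have hx1 : x = 1 := by
      have hsq : (x - 1) ^ 2 = 0 := by linear_combination x * h1 - hxy - x * h3
      have := pow_eq_zero_iff two_ne_zero |>.mp hsq
      linear_combination this
    have hy1 : y = 1 := by linear_combination h1 - hx1 - h3
    rcases h with hne | ⟨hx1', _⟩
    · exact hne (hx1.trans hy1.symm)
    · exact hx1' hx1
  constructor
  · intro h0
    have h0q : (x + y + x * y) ^ (3 ^ m) = 0 := by rw [h0, zero_pow hq0]
    rw [frob, frob, mul_pow, hxi, hyi] at h0q
    have h1 : x + y + 1 = 0 := by
      field_simp at h0q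
      linear_combination h0q
    exact contra ⟨h1, h0⟩
  · intro h0
    have h0q : (x + y + 1) ^ (3 ^ m) = 0 := by rw [h0, zero_pow hq0]
    rw [frob, frob, one_pow, hxi, hyi] at h0q
    have h2 : x + y + x * y = 0 := by
      field_simp at h0q
      linear_combination h0q
    exact contra ⟨h0, h2⟩
end

section
/- Let q = 3^m with m a positive integer and let U_{q+1} be the group of (q+1)-th roots of unity in F_{q^2}. If x, y ∈ U_{q+1}\{1} are distinct, then the element z := -(x + y + xy)/(x + y + 1) lies in U_{q+1} and is distinct from x, y, and 1. -/
/-- for distinct `x, y ∈ U_{q+1} \ {1}`, the element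
`z = -(x+y+xy)/(x+y+1)` lies in `U_{q+1}` and differs from `x`, `y` and `1`. -/
theorem stmt10 {E : Type*} [Field E] [Fintype E] (m : ℕ) (hm : 0 < m)
    (hE : Fintype.card E = (3 ^ m) ^ 2)
    (x y : E) (hx : x ^ (3 ^ m + 1) = 1) (hy : y ^ (3 ^ m + 1) = 1)
    (hx1 : x ≠ 1) (hy1 : y ≠ 1) (hxy : x ≠ y) :
    (-(x + y + x * y) / (x + y + 1)) ^ (3 ^ m + 1) = 1 ∧
    -(x + y + x * y) / (x + y + 1) ≠ x ∧
    -(x + y + x * y) / (x + y + 1) ≠ y ∧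
    -(x + y + x * y) / (x + y + 1) ≠ 1 := by
  -- characteristic 3
  haveI : CharP E (ringChar E) := ringChar.charP E
  obtain ⟨n, hp3, hcard⟩ := FiniteField.card E (ringChar E)
  have hdvd : ringChar E ∣ 3 := by
    have : ringChar E ∣ 3 ^ (m * 2) := by
      rw [pow_mul, ← hE, hcard]
      exact dvd_pow_self _ n.pos.ne'
    exact hp3.dvd_of_dvd_pow this
  have hchar3 : ringChar E = 3 :=
    ((Nat.prime_dvd_prime_iff_eq hp3 Nat.prime_three).mp hdvd)
  haveI hC : CharP E 3 := hchar3 ▸ ringChar.charP E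
  haveI : Fact (Nat.Prime 3) := ⟨Nat.prime_three⟩
  have h30 : (3 : E) = 0 := CharP.cast_eq_zero E 3
  have hx0 : x ≠ 0 := fun h => one_ne_zero (α := E) (by rw [← hx, h, zero_pow (by positivity)])
  have hy0 : y ≠ 0 := fun h => one_ne_zero (α := E) (by rw [← hy, h, zero_pow (by positivity)])
  have hxq : x ^ 3 ^ m = x⁻¹ := by
    field_simp
    rw [← pow_succ]
    exact hx
  have hyq : y ^ 3 ^ m = y⁻¹ := by
    field_simp
    rw [← pow_succ]
    exact hy
  have frob : ∀ a b : E, (a + b) ^ 3 ^ m = a ^ 3 ^ m + b ^ 3 ^ m := fun a b =>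
    add_pow_char_pow a b 3 m
  -- x + y + 1 ≠ 0
  have hb : x + y + 1 ≠ 0 := by
    intro h
    have h1 : x⁻¹ + y⁻¹ + 1 = 0 := by
      have h0 : (x + y + 1) ^ 3 ^ m = 0 := by rw [h]; exact zero_pow (by positivity)
      rwa [frob, frob, one_pow, hxq, hyq] at h0
    have h2 : x + y + x * y = 0 := by
      field_simp at h1
      linear_combination h1
    have hxy1 : x * y = 1 := by linear_combination h2 - h
    have hy' : y = x⁻¹ := eq_inv_of_mul_eq_one_right (by linear_combination hxy1)
    rw [hy'] at h
    have h4 : x ^ 2 + x + 1 = 0 := by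
      field_simp at h
      linear_combination h
    have h5 : (x - 1) ^ 3 = 0 := by
      linear_combination (x - 1) * h4 + (x - x ^ 2) * h30
    exact hx1 (sub_eq_zero.mp (pow_eq_zero_iff (n := 3) (by norm_num) |>.mp h5))
  -- x + y + x*y ≠ 0
  have ha : x + y + x * y ≠ 0 := by
    intro h
    have h1 : x⁻¹ + y⁻¹ + x⁻¹ * y⁻¹ = 0 := by
      have h0 : (x + y + x * y) ^ 3 ^ m = 0 := by rw [h]; exact zero_pow (by positivity)
      rwa [frob, frob, mul_pow, hxq, hyq] at h0
    apply hb
    field_simp at h1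
    linear_combination h1
  set a := x + y + x * y with hadef
  set b := x + y + 1 with hbdef
  -- Frobenius of a and b
  have haq : a ^ 3 ^ m * (x * y) = b := by
    rw [hadef, frob, frob, mul_pow, hxq, hyq]
    field_simp
    ring
  have hbq : b ^ 3 ^ m * (x * y) = a := by
    rw [hbdef, frob, frob, one_pow, hxq, hyq]
    field_simp
    ring
  refine ⟨?_, ?_, ?_, ?_⟩
  · have heven : Even (3 ^ m + 1) := Odd.add_one (Odd.pow (by decide : Odd 3))
    rw [div_pow, heven.neg_pow, pow_succ, pow_succ]
    rw [div_eq_one_iff_eq (mul_ne_zero (pow_ne_zero _ hb) hb)]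
    apply mul_right_cancel₀ (mul_ne_zero hx0 hy0)
    linear_combination a * haq - b * hbq
  · intro h
    rw [div_eq_iff hb] at h
    have : (x - 1) * (x - y) = 0 := by
      linear_combination -h + (-(x * y) - x) * h30
    rcases mul_eq_zero.mp this with h' | h'
    · exact hx1 (sub_eq_zero.mp h')
    · exact hxy (sub_eq_zero.mp h')
  · intro h
    rw [div_eq_iff hb] at h
    have : (y - 1) * (y - x) = 0 := by
      linear_combination -h + (-(x * y) - y) * h30
    rcases mul_eq_zero.mp this with h' | h'
    · exact hy1 (sub_eq_zero.mp h')
    · exact hxy (sub_eq_zero.mp h').symm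
  · intro h
    rw [div_eq_iff hb, one_mul] at h
    have : (x - 1) * (y - 1) = 0 := by
      linear_combination -h + (-x - y) * h30
    rcases mul_eq_zero.mp this with h' | h'
    · exact hx1 (sub_eq_zero.mp h')
    · exact hy1 (sub_eq_zero.mp h')
end

section
/- Let q = 3^m with m an odd positive integer and let U_{q+1} be the group of (q+1)-th roots of unity in F_{q^2}. If x, y, z are three pairwise distinct elements of U_{q+1}, then the 3×3 matrix with rows (x^4, y^4, z^4), (x^5, y^5, z^5), (x^{-5}, y^{-5}, z^{-5}) has nonzero determinant in F_{q^2}. -/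
set_option maxHeartbeats 1600000

private lemma five_mod (k : ℕ) : (3 ^ (2 * k + 1)) % 5 = 3 ∨ (3 ^ (2 * k + 1)) % 5 = 2 := by
  induction k with
  | zero => left; norm_num
  | succ n ih =>
    have h : 3 ^ (2 * (n + 1) + 1) = 3 ^ (2 * n + 1) * 9 := by ring
    rcases ih with h' | h' <;> rw [h, Nat.mul_mod, h'] <;> norm_num

private lemma gcd_dvd_two {m : ℕ} (hm : Odd m) : Nat.gcd 10 (3 ^ m + 1) ∣ 2 := by
  obtain ⟨k, rfl⟩ := hm
  have h5 := five_mod k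
  have h10 : Nat.gcd 10 (3 ^ (2 * k + 1) + 1) ∣ 10 := Nat.gcd_dvd_left _ _
  have hq : Nat.gcd 10 (3 ^ (2 * k + 1) + 1) ∣ 3 ^ (2 * k + 1) + 1 := Nat.gcd_dvd_right _ _
  have h5g : ¬ (5 ∣ Nat.gcd 10 (3 ^ (2 * k + 1) + 1)) := by
    intro h
    have h5d : (5 : ℕ) ∣ 3 ^ (2 * k + 1) + 1 := h.trans hq
    omega
  have hgle : Nat.gcd 10 (3 ^ (2 * k + 1) + 1) ≤ 10 := Nat.le_of_dvd (by norm_num) h10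
  set g := Nat.gcd 10 (3 ^ (2 * k + 1) + 1) with hg
  clear_value g
  interval_cases g <;> omega

private lemma pow3m {F : Type*} [Monoid F] {u : F} (hu : u ^ 9 = u) :
    ∀ (k : ℕ), u ^ 3 ^ (2 * k + 1) = u ^ 3 := by
  intro k
  induction k with
  | zero => norm_num
  | succ n ih =>
    have h : 3 ^ (2 * (n + 1) + 1) = 3 ^ (2 * n + 1) * 9 := by ring
    rw [h, pow_mul, ih, ← pow_mul]
    have h27 : (27 : ℕ) = 9 * 3 := by norm_num
    rw [show (3 * 9 : ℕ) = 9 * 3 from by norm_num, pow_mul, hu]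

private lemma sum0 {E : Type*} [Field E] [CharP E 3] (m : ℕ) {u v w : E}
    (hu : u ^ 3 ^ m * u = 1) (hv : v ^ 3 ^ m * v = 1) (hw : w ^ 3 ^ m * w = 1)
    (hsum : u + v + w = 0) : u = v := by
  haveI : Fact (Nat.Prime 3) := ⟨by norm_num⟩
  have h3 : (3 : E) = 0 := by exact_mod_cast CharP.cast_eq_zero E 3
  have huv : u + v = -w := by linear_combination hsum
  have hodd : Odd (3 ^ m) := Odd.pow (by decide)
  have h1 : (u ^ 3 ^ m + v ^ 3 ^ m) * (u + v) = 1 := by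
    calc (u ^ 3 ^ m + v ^ 3 ^ m) * (u + v) = (u + v) ^ 3 ^ m * (u + v) := by
          rw [add_pow_char_pow]
      _ = (-w) ^ 3 ^ m * (-w) := by rw [huv]
      _ = w ^ 3 ^ m * w := by rw [hodd.neg_pow]; ring
      _ = 1 := hw
  have h2 : u ^ 3 ^ m * v + v ^ 3 ^ m * u = -1 := by linear_combination h1 - hu - hv
  have h4 : u ^ 2 + u * v + v ^ 2 = 0 := by
    linear_combination (u * v) * h2 - v ^ 2 * hu - u ^ 2 * hv
  have h5 : (u - v) ^ 3 = 0 := by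
    linear_combination (u - v) * h4 + (u * v ^ 2 - u ^ 2 * v) * h3
  have := pow_eq_zero_iff (n := 3) (by norm_num) |>.mp h5
  exact sub_eq_zero.mp this

private lemma key {E : Type*} [Field E] [CharP E 3] {m : ℕ} (hm : Odd m) (a b c : E)
    (ha : a ^ (3 ^ m + 1) = 1) (hb : b ^ (3 ^ m + 1) = 1) (hc : c ^ (3 ^ m + 1) = 1)
    (hab : a ≠ b) (hac : a ≠ c) (hbc : b ≠ c) :
    a ^ 10 * (b - c) + b ^ 10 * (c - a) + c ^ 10 * (a - b) ≠ 0 := by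
  haveI : Fact (Nat.Prime 3) := ⟨by norm_num⟩
  have h3 : (3 : E) = 0 := by exact_mod_cast CharP.cast_eq_zero E 3
  have ne0 : ∀ u : E, u ^ (3 ^ m + 1) = 1 → u ≠ 0 := by
    rintro u hu rfl
    rw [zero_pow (by positivity)] at hu
    exact zero_ne_one hu
  have ha0 := ne0 a ha
  have hb0 := ne0 b hb
  have hc0 := ne0 c hc
  have hq : ∀ u : E, u ^ (3 ^ m + 1) = 1 → u ^ 3 ^ m * u = 1 := fun u hu => by
    rw [← pow_succ]; exact hu
  have hqa := hq a ha
  have hqb := hq b hb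
  have hqc := hq c hc
  have ten : ∀ u v : E, u ^ (3 ^ m + 1) = 1 → v ^ (3 ^ m + 1) = 1 → u ^ 10 = v ^ 10 →
      u = v ∨ u = -v := by
    intro u v hu hv huv
    have hv0 := ne0 v hv
    have he10 : (u / v) ^ 10 = 1 := by rw [div_pow, huv, div_self (pow_ne_zero _ hv0)]
    have heq : (u / v) ^ (3 ^ m + 1) = 1 := by rw [div_pow, hu, hv]; norm_num
    have h2 : (u / v) ^ 2 = 1 := by
      have hdvd : orderOf (u / v) ∣ 2 :=
        dvd_trans (Nat.dvd_gcd (orderOf_dvd_of_pow_eq_one he10)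
          (orderOf_dvd_of_pow_eq_one heq)) (gcd_dvd_two hm)
      exact orderOf_dvd_iff_pow_eq_one.mp hdvd
    rw [sq, mul_self_eq_one_iff] at h2
    rcases h2 with h | h
    · left; exact (div_eq_one_iff_eq hv0).mp h
    · right
      have := (div_eq_iff hv0).mp h
      linear_combination this
  intro hS
  by_cases h1 : a ^ 10 = b ^ 10
  · rcases ten a b ha hb h1 with h | h
    · exact hab h
    · have h2 : (a - b) * (c ^ 10 - a ^ 10) = 0 := by linear_combination hS + (c - a) * h1
      rcases mul_eq_zero.mp h2 with h' | h'
      · exact hab (by linear_combination h')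
      · have h10 : a ^ 10 = c ^ 10 := by linear_combination -h'
        rcases ten a c ha hc h10 with h'' | h'' 
        · exact hac h''
        · exact hbc (by linear_combination h - h'')
  · have hab' : a - b ≠ 0 := sub_ne_zero.mpr hab
    have hac' : a - c ≠ 0 := sub_ne_zero.mpr hac
    set lam : E := (a ^ 10 - b ^ 10) / (a - b) with hlam
    have hlam0 : lam ≠ 0 := div_ne_zero (sub_ne_zero.mpr h1) hab'
    have hlab : lam * (a - b) = a ^ 10 - b ^ 10 := div_mul_cancel₀ _ hab'
    clear_value lam
    clear hlam
    set mu : E := a ^ 10 - lam * a with hmu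
    clear_value mu
    have hA : a ^ 10 = lam * a + mu := by rw [hmu]; ring
    have hB : b ^ 10 = lam * b + mu := by rw [hmu]; linear_combination hlab
    have hC : c ^ 10 = lam * c + mu := by
      have h' : (a - b) * (c ^ 10 - (lam * c + mu)) = 0 := by
        rw [hmu]; linear_combination hS + (a - c) * hlab
      rcases mul_eq_zero.mp h' with h'' | h''
      · exact absurd (sub_eq_zero.mp h'') hab
      · linear_combination h''
    have keyP : ∀ u : E, u ^ 3 ^ m * u = 1 → u ^ 10 = lam * u + mu →
        lam ^ 3 ^ m * u ^ 9 + mu ^ 3 ^ m * (lam * u) + mu ^ 3 ^ m * mu = 1 := by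
      intro u hqu h10
      have e1 : (u ^ 3 ^ m) ^ 10 = lam ^ 3 ^ m * u ^ 3 ^ m + mu ^ 3 ^ m := by
        rw [pow_right_comm, h10, add_pow_char_pow, mul_pow]
      linear_combination (-(u ^ 10)) * e1
        + ((1 + (u ^ 3 ^ m * u) + (u ^ 3 ^ m * u) ^ 2 + (u ^ 3 ^ m * u) ^ 3 + (u ^ 3 ^ m * u) ^ 4
          + (u ^ 3 ^ m * u) ^ 5 + (u ^ 3 ^ m * u) ^ 6 + (u ^ 3 ^ m * u) ^ 7 + (u ^ 3 ^ m * u) ^ 8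
          + (u ^ 3 ^ m * u) ^ 9) - lam ^ 3 ^ m * u ^ 9) * hqu
        + (-(mu ^ 3 ^ m)) * h10
    have hPa := keyP a hqa hA
    have hPb := keyP b hqb hB
    have hPc := keyP c hqc hC
    have h9ab : (a - b) ^ 9 = a ^ 9 - b ^ 9 := by
      have := sub_pow_char_pow (p := 3) (R := E) a b 2
      norm_num at this
      exact this
    have h9ac : (a - c) ^ 9 = a ^ 9 - c ^ 9 := by
      have := sub_pow_char_pow (p := 3) (R := E) a c 2
      norm_num at this
      exact this
    have hd1 : lam ^ 3 ^ m * (a - b) ^ 9 + mu ^ 3 ^ m * lam * (a - b) = 0 := by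
      linear_combination hPa - hPb + lam ^ 3 ^ m * h9ab
    have hd2 : lam ^ 3 ^ m * (a - c) ^ 9 + mu ^ 3 ^ m * lam * (a - c) = 0 := by
      linear_combination hPa - hPc + lam ^ 3 ^ m * h9ac
    have hL0 : lam ^ 3 ^ m ≠ 0 := pow_ne_zero _ hlam0
    have hcross : (a - b) ^ 9 * (a - c) = (a - b) * (a - c) ^ 9 := by
      have h' : lam ^ 3 ^ m * ((a - b) ^ 9 * (a - c) - (a - b) * (a - c) ^ 9) = 0 := by
        linear_combination (a - c) * hd1 - (a - b) * hd2
      have := (mul_eq_zero.mp h').resolve_left hL0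
      linear_combination this
    set w : E := (a - b) / (a - c) with hw
    clear_value w
    have hw0 : w ≠ 0 := by rw [hw]; exact div_ne_zero hab' hac'
    have hw9 : w ^ 9 = w := by
      rw [hw, div_pow, div_eq_div_iff (pow_ne_zero _ hac') hac']
      linear_combination hcross
    have hw8 : w ^ 8 = 1 := by
      have h' : w ^ 8 * w = 1 * w := by rw [← pow_succ, hw9, one_mul]
      exact mul_right_cancel₀ hw0 h'
    have hwd : a - b = w * (a - c) := by rw [hw]; exact (div_mul_cancel₀ _ hac').symm
    by_cases hw1 : w = 1
    · rw [hw1, one_mul] at hwd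
      exact hbc (by linear_combination -hwd)
    · by_cases hwm1 : w = -1
      · rw [hwm1] at hwd
        have hsum : a + b + c = 0 := by linear_combination -hwd + a * h3
        exact hab (sum0 m hqa hqb hqc hsum)
      · have hw1' : w - 1 ≠ 0 := sub_ne_zero.mpr hw1
        have hw2 : w ^ 2 ≠ 1 := by
          intro h
          have h' : (w - 1) * (w + 1) = 0 := by linear_combination h
          rcases mul_eq_zero.mp h' with h'' | h''
          · exact hw1 (by linear_combination h'')
          · exact hwm1 (by linear_combination h'')
        obtain ⟨k, hk⟩ := hm
        have hwq : w ^ 3 ^ m = w ^ 3 := by rw [hk]; exact pow3m hw9 k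
        have hsub_ac : (a - c) ^ 3 ^ m = a ^ 3 ^ m - c ^ 3 ^ m :=
          sub_pow_char_pow (p := 3) a c m
        have hb' : b = a - w * (a - c) := by linear_combination -hwd
        have hbq : b ^ 3 ^ m = a ^ 3 ^ m - w ^ 3 * (a ^ 3 ^ m - c ^ 3 ^ m) := by
          rw [hb', sub_pow_char_pow (p := 3), mul_pow, hwq, hsub_ac]
        have hqb' : (a ^ 3 ^ m - w ^ 3 * (a ^ 3 ^ m - c ^ 3 ^ m)) * (a - w * (a - c)) = 1 := by
          rw [← hbq, ← hb']; exact hqb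
        have hN1 : (a ^ 3 ^ m - c ^ 3 ^ m) * (a - c)
            = a ^ 3 ^ m * (a - c) + a * (a ^ 3 ^ m - c ^ 3 ^ m) := by
          linear_combination hqc - hqa
        have hN2comb : (w ^ 4 - w) * ((a ^ 3 ^ m - c ^ 3 ^ m) * (a - c))
            = (w ^ 3 - w) * (a * (a ^ 3 ^ m - c ^ 3 ^ m)) := by
          linear_combination hqb' - hqa - w * hN1
        have hdq0 : a ^ 3 ^ m - c ^ 3 ^ m ≠ 0 := by
          rw [← hsub_ac]; exact pow_ne_zero _ hac'
        have hkey : (w ^ 4 - w) * (a - c) = (w ^ 3 - w) * a := by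
          apply mul_right_cancel₀ hdq0
          linear_combination hN2comb
        have hkey2 : (w ^ 3 - 1) * (a - c) = (w ^ 2 - 1) * a := by
          apply mul_right_cancel₀ hw0
          linear_combination hkey
        have hkey3 : (w - 1) ^ 3 * (a - c) = (w ^ 2 - 1) * a := by
          linear_combination hkey2 + ((w - w ^ 2) * (a - c)) * h3
        have hkey4 : (w - 1) ^ 2 * (a - c) = (w + 1) * a := by
          apply mul_left_cancel₀ hw1'
          linear_combination hkey3
        have hgb : (w - 1) ^ 2 * b = a := by
          linear_combination ((w - 1) ^ 2) * hb' - w * hkey4 - (a * w) * h3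
        have hgc : (w - 1) ^ 2 * c = w ^ 2 * a := by
          linear_combination (-1 : E) * hkey4 - (a * w) * h3
        have hb10 : ((w - 1) ^ 2) ^ 10 * b ^ 10 = a ^ 10 := by rw [← mul_pow, hgb]
        have hc10 : ((w - 1) ^ 2) ^ 10 * c ^ 10 = w ^ 20 * a ^ 10 := by
          rw [← mul_pow, hgc, mul_pow, ← pow_mul]
        have hQ' : a ^ 11 * (((w - 1) ^ 2) ^ 10 * (1 - w ^ 2) + (w ^ 2 - (w - 1) ^ 2)
            + w ^ 20 * ((w - 1) ^ 2 - 1)) = 0 := by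
          linear_combination ((w - 1) ^ 2) ^ 11 * hS
            - (a ^ 10 * ((w - 1) ^ 2) ^ 10 - w ^ 20 * a ^ 10) * hgb
            + (a ^ 10 * ((w - 1) ^ 2) ^ 10 - a ^ 10) * hgc
            - ((w - 1) ^ 2 * c - (w - 1) ^ 2 * a) * hb10
            - ((w - 1) ^ 2 * a - (w - 1) ^ 2 * b) * hc10
        have hQ : ((w - 1) ^ 2) ^ 10 * (1 - w ^ 2) + (w ^ 2 - (w - 1) ^ 2)
            + w ^ 20 * ((w - 1) ^ 2 - 1) = 0 :=
          (mul_eq_zero.mp hQ').resolve_left (pow_ne_zero _ ha0)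
        have hfin : w ^ 2 = 1 := by
          linear_combination (w + w ^ 2 + w ^ 3) * hQ + ((1) + (2)*w ^ 2 + (2)*w ^ 4 + (1)*w ^ 5 + (1)*w ^ 6 + (2)*w ^ 7 + (1)*w ^ 8 + (2)*w ^ 11 + (1)*w ^ 12 + (1)*w ^ 13 + (2)*w ^ 14) * hw8 + ((7)*w ^ 2 + (-57)*w ^ 3 + (317)*w ^ 4 + (-1241)*w ^ 5 + (3610)*w ^ 6 + (-8068)*w ^ 7 + (14155)*w ^ 8 + (-19703)*w ^ 9 + (21748)*w ^ 10 + (-18518)*w ^ 11 + (10551)*w ^ 12 + (-10551)*w ^ 14 + (18518)*w ^ 15 + (-21749)*w ^ 16 + (19703)*w ^ 17 + (-14155)*w ^ 18 + (8068)*w ^ 19 + (-3610)*w ^ 20 + (1241)*w ^ 21 + (-317)*w ^ 22 + (57)*w ^ 23 + (-6)*w ^ 24) * h3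
        exact hw2 hfin

/-- for pairwise distinct `x, y, z ∈ U_{q+1}`, `q = 3^m` with `m` odd,
the matrix with rows `(x⁴,y⁴,z⁴)`, `(x⁵,y⁵,z⁵)`, `(x⁻⁵,y⁻⁵,z⁻⁵)` is nonsingular. -/
theorem stmt11 {E : Type*} [Field E] [Fintype E] (m : ℕ) (hm : Odd m)
    (hE : Fintype.card E = (3 ^ m) ^ 2)
    (x y z : E) (hx : x ^ (3 ^ m + 1) = 1) (hy : y ^ (3 ^ m + 1) = 1)
    (hz : z ^ (3 ^ m + 1) = 1)
    (hxy : x ≠ y) (hxz : x ≠ z) (hyz : y ≠ z) :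
    Matrix.det !![x ^ 4, y ^ 4, z ^ 4;
                  x ^ 5, y ^ 5, z ^ 5;
                  x ^ (-5 : ℤ), y ^ (-5 : ℤ), z ^ (-5 : ℤ)] ≠ 0 := by
  haveI : Fact (Nat.Prime 3) := ⟨by norm_num⟩
  obtain ⟨n, hp, hcard⟩ := FiniteField.card E (ringChar E)
  have hr3 : ringChar E = 3 := by
    have hdvd : ringChar E ∣ 3 ^ (2 * m) := by
      have h1 : ringChar E ∣ ringChar E ^ (n : ℕ) := dvd_pow_self _ n.ne_zero
      rw [← hcard, hE, ← pow_mul] at h1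
      rwa [show m * 2 = 2 * m from by ring] at h1
    have h2 := Nat.Prime.dvd_of_dvd_pow hp hdvd
    exact (Nat.prime_dvd_prime_iff_eq hp (by norm_num)).mp h2
  haveI : CharP E 3 := hr3 ▸ ringChar.charP E
  have ne0 : ∀ u : E, u ^ (3 ^ m + 1) = 1 → u ≠ 0 := by
    rintro u hu rfl
    rw [zero_pow (by positivity)] at hu
    exact zero_ne_one hu
  have hx0 := ne0 x hx
  have hy0 := ne0 y hy
  have hz0 := ne0 z hz
  intro hD
  have hinvpow : ∀ u : E, u ^ (3 ^ m + 1) = 1 → (u⁻¹) ^ (3 ^ m + 1) = 1 := by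
    intro u hu
    rw [inv_pow, hu, inv_one]
  have hSrel : (x⁻¹) ^ 10 * (y⁻¹ - z⁻¹) + (y⁻¹) ^ 10 * (z⁻¹ - x⁻¹) + (z⁻¹) ^ 10 * (x⁻¹ - y⁻¹)
      = (x⁻¹ * y⁻¹ * z⁻¹) ^ 5 * Matrix.det !![x ^ 4, y ^ 4, z ^ 4;
          x ^ 5, y ^ 5, z ^ 5;
          x ^ (-5 : ℤ), y ^ (-5 : ℤ), z ^ (-5 : ℤ)] := by
    have hxinv : x * x⁻¹ = 1 := mul_inv_cancel₀ hx0
    have hyinv : y * y⁻¹ = 1 := mul_inv_cancel₀ hy0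
    have hzinv : z * z⁻¹ = 1 := mul_inv_cancel₀ hz0
    rw [Matrix.det_fin_three]
    norm_num [Matrix.cons_val_zero, Matrix.cons_val_one, Matrix.cons_val_two, Matrix.tail_cons, Matrix.head_cons, zpow_neg, zpow_ofNat]
    rw [show (x^5 : E)⁻¹ = x⁻¹^5 from (inv_pow x 5).symm,
      show (y^5 : E)⁻¹ = y⁻¹^5 from (inv_pow y 5).symm,
      show (z^5 : E)⁻¹ = z⁻¹^5 from (inv_pow z 5).symm]
    linear_combination ((-1)*z^4*y⁻¹^10*z⁻¹^5 + (1)*z^5*x⁻¹*y⁻¹^10*z⁻¹^5 + (1)*y^4*y⁻¹^5*z⁻¹^10 + (-1)*y^5*x⁻¹*y⁻¹^5*z⁻¹^10 + (-1)*x*z^4*x⁻¹*y⁻¹^10*z⁻¹^5 + (1)*x*z^5*x⁻¹^2*y⁻¹^10*z⁻¹^5 + (1)*x*y^4*x⁻¹*y⁻¹^5*z⁻¹^10 + (-1)*x*y^5*x⁻¹^2*y⁻¹^5*z⁻¹^10 + (-1)*x^2*z^4*x⁻¹^2*y⁻¹^10*z⁻¹^5 + (1)*x^2*z^5*x⁻¹^3*y⁻¹^10*z⁻¹^5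 + (1)*x^2*y^4*x⁻¹^2*y⁻¹^5*z⁻¹^10 + (-1)*x^2*y^5*x⁻¹^3*y⁻¹^5*z⁻¹^10 + (-1)*x^3*z^4*x⁻¹^3*y⁻¹^10*z⁻¹^5 + (1)*x^3*z^5*x⁻¹^4*y⁻¹^10*z⁻¹^5 + (1)*x^3*y^4*x⁻¹^3*y⁻¹^5*z⁻¹^10 + (-1)*x^3*y^5*x⁻¹^4*y⁻¹^5*z⁻¹^10 + (-1)*x^4*z^4*x⁻¹^4*y⁻¹^10*z⁻¹^5 + (1)*x^4*y^4*x⁻¹^4*y⁻¹^5*z⁻¹^10) * hxinv + ((1)*y⁻¹*z⁻¹^10 + (-1)*x⁻¹*z⁻¹^10 + (1)*z^4*x⁻¹^10*z⁻¹^5 + (-1)*z^5*x⁻¹^10*y⁻¹*z⁻¹^5 + (1)*y*y⁻¹^2*z⁻¹^10 + (-1)*y*x⁻¹*y⁻¹*z⁻¹^10 + (1)*y*z^4*x⁻¹^10*y⁻¹*z⁻¹^5 + (-1)*y*z^5*x⁻¹^10*y⁻¹^2*z⁻¹^5 + (1)*y^2*y⁻¹^3*z⁻¹^10 + (-1)*y^2*x⁻¹*y⁻¹^2*z⁻¹^10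 + (1)*y^2*z^4*x⁻¹^10*y⁻¹^2*z⁻¹^5 + (-1)*y^2*z^5*x⁻¹^10*y⁻¹^3*z⁻¹^5 + (1)*y^3*y⁻¹^4*z⁻¹^10 + (-1)*y^3*x⁻¹*y⁻¹^3*z⁻¹^10 + (1)*y^3*z^4*x⁻¹^10*y⁻¹^3*z⁻¹^5 + (-1)*y^3*z^5*x⁻¹^10*y⁻¹^4*z⁻¹^5 + (-1)*y^4*x⁻¹*y⁻¹^4*z⁻¹^10 + (1)*y^4*z^4*x⁻¹^10*y⁻¹^4*z⁻¹^5) * hyinv + ((-1)*y⁻¹^10*z⁻¹ + (1)*x⁻¹*y⁻¹^10 + (1)*x⁻¹^10*z⁻¹ + (-1)*x⁻¹^10*y⁻¹ + (-1)*z*y⁻¹^10*z⁻¹^2 + (1)*z*x⁻¹*y⁻¹^10*z⁻¹ + (1)*z*x⁻¹^10*z⁻¹^2 + (-1)*z*x⁻¹^10*y⁻¹*z⁻¹ + (-1)*z^2*y⁻¹^10*z⁻¹^3 + (1)*z^2*x⁻¹*y⁻¹^10*z⁻¹^2 + (1)*z^2*x⁻¹^10*z⁻¹^3 + (-1)*z^2*x⁻¹^10*y⁻¹*z⁻¹^2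 + (-1)*z^3*y⁻¹^10*z⁻¹^4 + (1)*z^3*x⁻¹*y⁻¹^10*z⁻¹^3 + (1)*z^3*x⁻¹^10*z⁻¹^4 + (-1)*z^3*x⁻¹^10*y⁻¹*z⁻¹^3 + (1)*z^4*x⁻¹*y⁻¹^10*z⁻¹^4 + (-1)*z^4*x⁻¹^10*y⁻¹*z⁻¹^4) * hzinv
  rw [hD, mul_zero] at hSrel
  exact key hm x⁻¹ y⁻¹ z⁻¹ (hinvpow x hx) (hinvpow y hy) (hinvpow z hz)
    (fun h => hxy (inv_injective h)) (fun h => hxz (inv_injective h))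
    (fun h => hyz (inv_injective h)) hSrel
end

section
/- Let q = 3^m with m a positive integer and let x, y, z be pairwise distinct elements of U_{q+1}\{1} in F_{q^2}. Writing X = x-1, Y = y-1, Z = z-1, the determinant of the 4×4 matrix with rows (x^4, y^4, z^4, 1), (x^5, y^5, z^5, 1), (x^{-5}, y^{-5}, z^{-5}, 1), (x^{-4}, y^{-4}, z^{-4}, 1) equals XYZ / ((X+1)(Y+1)(Z+1))^5 times the determinant of the 2×2 matrix with rows (Y^9 - X^9, Z^9 - X^9) and (Y^8 - X^8, Z^8 - X^8). -/
open Matrix in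
theorem det_fin_four' {R : Type*} [CommRing R] (A : Matrix (Fin 4) (Fin 4) R) :
    det A =
      A 0 0 * (A 1 1 * A 2 2 * A 3 3 - A 1 1 * A 2 3 * A 3 2 - A 1 2 * A 2 1 * A 3 3
        + A 1 2 * A 2 3 * A 3 1 + A 1 3 * A 2 1 * A 3 2 - A 1 3 * A 2 2 * A 3 1)
      - A 0 1 * (A 1 0 * A 2 2 * A 3 3 - A 1 0 * A 2 3 * A 3 2 - A 1 2 * A 2 0 * A 3 3
        + A 1 2 * A 2 3 * A 3 0 + A 1 3 * A 2 0 * A 3 2 - A 1 3 * A 2 2 * A 3 0)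
      + A 0 2 * (A 1 0 * A 2 1 * A 3 3 - A 1 0 * A 2 3 * A 3 1 - A 1 1 * A 2 0 * A 3 3
        + A 1 1 * A 2 3 * A 3 0 + A 1 3 * A 2 0 * A 3 1 - A 1 3 * A 2 1 * A 3 0)
      - A 0 3 * (A 1 0 * A 2 1 * A 3 2 - A 1 0 * A 2 2 * A 3 1 - A 1 1 * A 2 0 * A 3 2
        + A 1 1 * A 2 2 * A 3 0 + A 1 2 * A 2 0 * A 3 1 - A 1 2 * A 2 1 * A 3 0) := by
  rw [Matrix.det_succ_row_zero]
  simp [Fin.sum_univ_succ, Matrix.det_fin_three, Fin.succAbove,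
    show (Fin.succ 2 : Fin 4) = 3 from rfl, show (Fin.castSucc 2 : Fin 4) = 2 from rfl,
    show ((2 : Fin 3).succ : Fin 4) = 3 from rfl]
  ring

theorem det4_lit {R : Type*} [CommRing R] (a b c d e f g h i j k l : R) :
    Matrix.det !![a,b,c,1; d,e,f,1; g,h,i,1; j,k,l,1] =
      a * (e * i - e * l - f * h + f * k + h * l - i * k)
      - b * (d * i - d * l - f * g + f * j + g * l - i * j)
      + c * (d * h - d * k - e * g + e * j + g * k - h * j)
      - (d * h * l - d * i * k - e * g * l + e * i * j + f * g * k - f * h * j) := by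
  rw [det_fin_four']
  norm_num [Matrix.cons_val_two, Matrix.cons_val_three, Matrix.vecHead, Matrix.vecTail,
    Function.comp]

set_option maxHeartbeats 1000000 in
/-- the 4×4 determinant factorization, with `X = x-1`, `Y = y-1`,
`Z = z-1` (so `X+1 = x`, etc.). -/
theorem stmt12 {E : Type*} [Field E] [Fintype E] (m : ℕ) (hm : 0 < m)
    (hE : Fintype.card E = (3 ^ m) ^ 2)
    (x y z : E) (hx : x ^ (3 ^ m + 1) = 1) (hy : y ^ (3 ^ m + 1) = 1)
    (hz : z ^ (3 ^ m + 1) = 1)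
    (hx1 : x ≠ 1) (hy1 : y ≠ 1) (hz1 : z ≠ 1)
    (hxy : x ≠ y) (hxz : x ≠ z) (hyz : y ≠ z) :
    Matrix.det !![x ^ 4, y ^ 4, z ^ 4, 1;
                  x ^ 5, y ^ 5, z ^ 5, 1;
                  x ^ (-5 : ℤ), y ^ (-5 : ℤ), z ^ (-5 : ℤ), 1;
                  x ^ (-4 : ℤ), y ^ (-4 : ℤ), z ^ (-4 : ℤ), 1] =
      (x - 1) * (y - 1) * (z - 1) / (x * y * z) ^ 5 *
        Matrix.det !![(y - 1) ^ 9 - (x - 1) ^ 9, (z - 1) ^ 9 - (x - 1) ^ 9;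
                      (y - 1) ^ 8 - (x - 1) ^ 8, (z - 1) ^ 8 - (x - 1) ^ 8] := by
  -- the characteristic is 3
  have hp := ringChar.charP E
  obtain ⟨n, hn, hcard⟩ := FiniteField.card E (ringChar E)
  have h3 : ringChar E = 3 := by
    have hdvd : ringChar E ∣ 3 ^ (m * 2) := by
      rw [pow_mul, ← hE, hcard]
      exact dvd_pow_self _ (by positivity)
    exact (Nat.prime_dvd_prime_iff_eq hn Nat.prime_three).mp (hn.dvd_of_dvd_pow hdvd)
  rw [h3] at hp
  -- Frobenius squared: (a - 1)^9 = a^9 - 1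
  have h9 : ∀ a : E, (a - 1) ^ 9 = a ^ 9 - 1 := fun a => by
    have := sub_pow_char_pow (p := 3) (n := 2) (x := a) (y := (1 : E))
    simpa using this
  have hx0 : x ≠ 0 := by rintro rfl; simp at hx
  have hy0 : y ≠ 0 := by rintro rfl; simp at hy
  have hz0 : z ≠ 0 := by rintro rfl; simp at hz
  -- the key char-3 identity for the 2×2 determinant
  have hdet2 : (x - 1) * (y - 1) * (z - 1) *
      (((y - 1) ^ 9 - (x - 1) ^ 9) * ((z - 1) ^ 8 - (x - 1) ^ 8) -
        ((z - 1) ^ 9 - (x - 1) ^ 9) * ((y - 1) ^ 8 - (x - 1) ^ 8)) =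
      (y ^ 9 - x ^ 9) * ((x - 1) * (y - 1) * (z ^ 9 - 1) - (y - 1) * (z - 1) * (x ^ 9 - 1)) -
      (z ^ 9 - x ^ 9) * ((x - 1) * (z - 1) * (y ^ 9 - 1) - (y - 1) * (z - 1) * (x ^ 9 - 1)) := by
    linear_combination
      (-((x - 1) * (y - 1) * (z - 1) ^ 9 - (y - 1) * (z - 1) * (x - 1) ^ 9)
        - (y ^ 9 - x ^ 9) * ((y - 1) * (z - 1))
        + ((x - 1) * (z - 1) * (y - 1) ^ 9 - (y - 1) * (z - 1) * (x - 1) ^ 9)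
        + (z ^ 9 - x ^ 9) * ((y - 1) * (z - 1))) * h9 x +
      ((( x - 1) * (y - 1) * (z - 1) ^ 9 - (y - 1) * (z - 1) * (x - 1) ^ 9)
        - (z ^ 9 - x ^ 9) * ((x - 1) * (z - 1))) * h9 y +
      ((y ^ 9 - x ^ 9) * ((x - 1) * (y - 1))
        - ((x - 1) * (z - 1) * (y - 1) ^ 9 - (y - 1) * (z - 1) * (x - 1) ^ 9)) * h9 z
  -- scale the columns by x^5, y^5, z^5
  have hmat : (Matrix.of fun i j => ![x ^ 5, y ^ 5, z ^ 5, (1 : E)] j *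
      (!![x ^ 4, y ^ 4, z ^ 4, 1;
          x ^ 5, y ^ 5, z ^ 5, 1;
          x ^ (-5 : ℤ), y ^ (-5 : ℤ), z ^ (-5 : ℤ), 1;
          x ^ (-4 : ℤ), y ^ (-4 : ℤ), z ^ (-4 : ℤ), 1] i j)) =
      !![x ^ 9, y ^ 9, z ^ 9, 1;
         x ^ 10, y ^ 10, z ^ 10, 1;
         1, 1, 1, 1;
         x, y, z, 1] := by
    ext i j
    fin_cases i <;> fin_cases j <;>
      simp [Matrix.cons_val_two, Matrix.cons_val_three, zpow_neg] <;>
      (try norm_cast) <;>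
      first
        | ring1
        | exact mul_inv_cancel₀ (pow_ne_zero _ hx0)
        | exact mul_inv_cancel₀ (pow_ne_zero _ hy0)
        | exact mul_inv_cancel₀ (pow_ne_zero _ hz0)
        | (rw [pow_succ, mul_comm _ x, mul_assoc, mul_inv_cancel₀ (pow_ne_zero _ hx0), mul_one])
        | (rw [pow_succ, mul_comm _ y, mul_assoc, mul_inv_cancel₀ (pow_ne_zero _ hy0), mul_one])
        | (rw [pow_succ, mul_comm _ z, mul_assoc, mul_inv_cancel₀ (pow_ne_zero _ hz0), mul_one])
  have hscale := Matrix.det_mul_row (![x ^ 5, y ^ 5, z ^ 5, (1 : E)])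
      (!![x ^ 4, y ^ 4, z ^ 4, 1;
          x ^ 5, y ^ 5, z ^ 5, 1;
          x ^ (-5 : ℤ), y ^ (-5 : ℤ), z ^ (-5 : ℤ), 1;
          x ^ (-4 : ℤ), y ^ (-4 : ℤ), z ^ (-4 : ℤ), 1])
  rw [hmat] at hscale
  rw [det4_lit] at hscale
  simp only [Fin.prod_univ_four, Matrix.cons_val_zero, Matrix.cons_val_one, Matrix.head_cons,
    Matrix.cons_val_two, Matrix.cons_val_three, Matrix.tail_cons, Matrix.vecHead, Matrix.vecTail,
    Function.comp_apply, Fin.succ_zero_eq_one, Fin.succ_one_eq_two, Matrix.cons_val_succ,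
    mul_one] at hscale
  rw [Matrix.det_fin_two_of, div_mul_eq_mul_div,
    eq_div_iff (pow_ne_zero 5 (mul_ne_zero (mul_ne_zero hx0 hy0) hz0))]
  linear_combination (-1 : E) * hscale - hdet2
end

section
/- Let q = 3^m with m a positive integer and let x, y, z be pairwise distinct elements of U_{q+1}\{1} in F_{q^2}. With X = x-1, Y = y-1, Z = z-1, the 4×4 determinant det[(x^4,y^4,z^4,1);(x^5,y^5,z^5,1);(x^{-5},y^{-5},z^{-5},1);(x^{-4},y^{-4},z^{-4},1)] vanishes in F_{q^2} if and only if the 2×2 determinant (Y^9 - X^9)(Z^8 - X^8) - (Z^9 - X^9)(Y^8 - X^8) vanishes in F_{q^2}. -/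
set_option maxHeartbeats 4000000

/-- The column-scaled polynomial identity in characteristic 3. -/
lemma detM_eq {E : Type*} [Field E] (h3 : (3 : E) = 0) (x y z : E) :
    Matrix.det !![x ^ 9, y ^ 9, z ^ 9, 1;
                  x ^ 10, y ^ 10, z ^ 10, 1;
                  1, 1, 1, 1;
                  x, y, z, 1] =
    (x - 1) * (y - 1) * (z - 1) *
      (((y - 1) ^ 9 - (x - 1) ^ 9) * ((z - 1) ^ 8 - (x - 1) ^ 8) -
        ((z - 1) ^ 9 - (x - 1) ^ 9) * ((y - 1) ^ 8 - (x - 1) ^ 8)) := by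
  simp only [Matrix.det_succ_row_zero, Fin.sum_univ_succ, Matrix.submatrix_apply]
  simp [Fin.succAbove, Fin.lt_def]
  linear_combination ((-12 : E) * y * z ^ 2 + (68 : E) * y * z ^ 3 + (-182 : E) * y * z ^ 4 + (294 : E) * y * z ^ 5 + (-308 : E) * y * z ^ 6 + (212 : E) * y * z ^ 7 + (-93 : E) * y * z ^ 8 + (24 : E) * y * z ^ 9 + (-3 : E) * y * z ^ 10 + (12 : E) * y ^ 2 * z + (-180 : E) * y ^ 2 * z ^ 3 + (630 : E) * y ^ 2 * z ^ 4 + (-1134 : E) * y ^ 2 * z ^ 5 + (1260 : E) * y ^ 2 * z ^ 6 + (-900 : E) * y ^ 2 * z ^ 7 + (405 : E) * y ^ 2 * z ^ 8 + (-105 : E) * y ^ 2 * z ^ 9 + (12 : E) * y ^ 2 * z ^ 10 + (-68 : E) * y ^ 3 * z + (180 : E) * y ^ 3 * z ^ 2 + (-840 : E) * y ^ 3 * z ^ 4 + (2016 : E) * y ^ 3 * z ^ 5 + (-2520 : E) * y ^ 3 * z ^ 6 + (1920 : E) * y ^ 3 * z ^ 7 + (-900 : E) * y ^ 3 * z ^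 8 + (240 : E) * y ^ 3 * z ^ 9 + (-28 : E) * y ^ 3 * z ^ 10 + (182 : E) * y ^ 4 * z + (-630 : E) * y ^ 4 * z ^ 2 + (840 : E) * y ^ 4 * z ^ 3 + (-1764 : E) * y ^ 4 * z ^ 5 + (2940 : E) * y ^ 4 * z ^ 6 + (-2520 : E) * y ^ 4 * z ^ 7 + (1260 : E) * y ^ 4 * z ^ 8 + (-350 : E) * y ^ 4 * z ^ 9 + (42 : E) * y ^ 4 * z ^ 10 + (-294 : E) * y ^ 5 * z + (1134 : E) * y ^ 5 * z ^ 2 + (-2016 : E) * y ^ 5 * z ^ 3 + (1764 : E) * y ^ 5 * z ^ 4 + (-1764 : E) * y ^ 5 * z ^ 6 + (2016 : E) * y ^ 5 * z ^ 7 + (-1134 : E) * y ^ 5 * z ^ 8 + (336 : E) * y ^ 5 * z ^ 9 + (-42 : E) * y ^ 5 * z ^ 10 + (308 : E) * y ^ 6 * z + (-1260 : E) * y ^ 6 * z ^ 2 + (2520 : E) * y ^ 6 * z ^ 3 + (-2940 : E) * y ^ 6 * z ^ 4 + (1764 : E) * y ^ 6 * z ^ 5 + (-840 : E) * y ^ 6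 * z ^ 7 + (630 : E) * y ^ 6 * z ^ 8 + (-210 : E) * y ^ 6 * z ^ 9 + (28 : E) * y ^ 6 * z ^ 10 + (-212 : E) * y ^ 7 * z + (900 : E) * y ^ 7 * z ^ 2 + (-1920 : E) * y ^ 7 * z ^ 3 + (2520 : E) * y ^ 7 * z ^ 4 + (-2016 : E) * y ^ 7 * z ^ 5 + (840 : E) * y ^ 7 * z ^ 6 + (-180 : E) * y ^ 7 * z ^ 8 + (80 : E) * y ^ 7 * z ^ 9 + (-12 : E) * y ^ 7 * z ^ 10 + (93 : E) * y ^ 8 * z + (-405 : E) * y ^ 8 * z ^ 2 + (900 : E) * y ^ 8 * z ^ 3 + (-1260 : E) * y ^ 8 * z ^ 4 + (1134 : E) * y ^ 8 * z ^ 5 + (-630 : E) * y ^ 8 * z ^ 6 + (180 : E) * y ^ 8 * z ^ 7 + (-15 : E) * y ^ 8 * z ^ 9 + (3 : E) * y ^ 8 * z ^ 10 + (-24 : E) * y ^ 9 * z + (105 : E) * y ^ 9 * z ^ 2 + (-240 : E) * y ^ 9 * z ^ 3 + (350 : E) * y ^ 9 * z ^ 4 + (-336 : E) * y ^ 9 *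 z ^ 5 + (210 : E) * y ^ 9 * z ^ 6 + (-80 : E) * y ^ 9 * z ^ 7 + (15 : E) * y ^ 9 * z ^ 8 + (3 : E) * y ^ 10 * z + (-12 : E) * y ^ 10 * z ^ 2 + (28 : E) * y ^ 10 * z ^ 3 + (-42 : E) * y ^ 10 * z ^ 4 + (42 : E) * y ^ 10 * z ^ 5 + (-28 : E) * y ^ 10 * z ^ 6 + (12 : E) * y ^ 10 * z ^ 7 + (-3 : E) * y ^ 10 * z ^ 8 + (12 : E) * x * z ^ 2 + (-68 : E) * x * z ^ 3 + (182 : E) * x * z ^ 4 + (-294 : E) * x * z ^ 5 + (308 : E) * x * z ^ 6 + (-212 : E) * x * z ^ 7 + (93 : E) * x * z ^ 8 + (-24 : E) * x * z ^ 9 + (3 : E) * x * z ^ 10 + (-12 : E) * x * y ^ 2 + (180 : E) * x * y ^ 2 * z ^ 3 + (-630 : E) * x * y ^ 2 * z ^ 4 + (1134 : E) * x * y ^ 2 * z ^ 5 + (-1260 : E) * x * y ^ 2 * z ^ 6 + (900 : E) * x * y ^ 2 * z ^ 7 + (-405 : E) * x * y ^ 2 * z ^ 8 + (105 : E) * x *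 y ^ 2 * z ^ 9 + (-12 : E) * x * y ^ 2 * z ^ 10 + (68 : E) * x * y ^ 3 + (-180 : E) * x * y ^ 3 * z ^ 2 + (840 : E) * x * y ^ 3 * z ^ 4 + (-2016 : E) * x * y ^ 3 * z ^ 5 + (2520 : E) * x * y ^ 3 * z ^ 6 + (-1920 : E) * x * y ^ 3 * z ^ 7 + (900 : E) * x * y ^ 3 * z ^ 8 + (-240 : E) * x * y ^ 3 * z ^ 9 + (28 : E) * x * y ^ 3 * z ^ 10 + (-182 : E) * x * y ^ 4 + (630 : E) * x * y ^ 4 * z ^ 2 + (-840 : E) * x * y ^ 4 * z ^ 3 + (1764 : E) * x * y ^ 4 * z ^ 5 + (-2940 : E) * x * y ^ 4 * z ^ 6 + (2520 : E) * x * y ^ 4 * z ^ 7 + (-1260 : E) * x * y ^ 4 * z ^ 8 + (350 : E) * x * y ^ 4 * z ^ 9 + (-42 : E) * x * y ^ 4 * z ^ 10 + (294 : E) * x * y ^ 5 + (-1134 : E) * x * y ^ 5 * z ^ 2 + (2016 : E) * x * y ^ 5 * z ^ 3 + (-1764 : E) * x * y ^ 5 * z ^ 4 + (1764 : E) * x *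 y ^ 5 * z ^ 6 + (-2016 : E) * x * y ^ 5 * z ^ 7 + (1134 : E) * x * y ^ 5 * z ^ 8 + (-336 : E) * x * y ^ 5 * z ^ 9 + (42 : E) * x * y ^ 5 * z ^ 10 + (-308 : E) * x * y ^ 6 + (1260 : E) * x * y ^ 6 * z ^ 2 + (-2520 : E) * x * y ^ 6 * z ^ 3 + (2940 : E) * x * y ^ 6 * z ^ 4 + (-1764 : E) * x * y ^ 6 * z ^ 5 + (840 : E) * x * y ^ 6 * z ^ 7 + (-630 : E) * x * y ^ 6 * z ^ 8 + (210 : E) * x * y ^ 6 * z ^ 9 + (-28 : E) * x * y ^ 6 * z ^ 10 + (212 : E) * x * y ^ 7 + (-900 : E) * x * y ^ 7 * z ^ 2 + (1920 : E) * x * y ^ 7 * z ^ 3 + (-2520 : E) * x * y ^ 7 * z ^ 4 + (2016 : E) * x * y ^ 7 * z ^ 5 + (-840 : E) * x * y ^ 7 * z ^ 6 + (180 : E) * x * y ^ 7 * z ^ 8 + (-80 : E) * x * y ^ 7 * z ^ 9 + (12 : E) * x * y ^ 7 * z ^ 10 + (-93 : E) * x * y ^ 8 + (405 : E) * x * y ^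 8 * z ^ 2 + (-900 : E) * x * y ^ 8 * z ^ 3 + (1260 : E) * x * y ^ 8 * z ^ 4 + (-1134 : E) * x * y ^ 8 * z ^ 5 + (630 : E) * x * y ^ 8 * z ^ 6 + (-180 : E) * x * y ^ 8 * z ^ 7 + (15 : E) * x * y ^ 8 * z ^ 9 + (-3 : E) * x * y ^ 8 * z ^ 10 + (24 : E) * x * y ^ 9 + (-105 : E) * x * y ^ 9 * z ^ 2 + (240 : E) * x * y ^ 9 * z ^ 3 + (-350 : E) * x * y ^ 9 * z ^ 4 + (336 : E) * x * y ^ 9 * z ^ 5 + (-210 : E) * x * y ^ 9 * z ^ 6 + (80 : E) * x * y ^ 9 * z ^ 7 + (-15 : E) * x * y ^ 9 * z ^ 8 + (-3 : E) * x * y ^ 10 + (12 : E) * x * y ^ 10 * z ^ 2 + (-28 : E) * x * y ^ 10 * z ^ 3 + (42 : E) * x * y ^ 10 * z ^ 4 + (-42 : E) * x * y ^ 10 * z ^ 5 + (28 : E) * x * y ^ 10 * z ^ 6 + (-12 : E) * x * y ^ 10 * z ^ 7 + (3 : E) * x * y ^ 10 * z ^ 8 + (-12 : E) * x ^ 2 *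 z + (180 : E) * x ^ 2 * z ^ 3 + (-630 : E) * x ^ 2 * z ^ 4 + (1134 : E) * x ^ 2 * z ^ 5 + (-1260 : E) * x ^ 2 * z ^ 6 + (900 : E) * x ^ 2 * z ^ 7 + (-405 : E) * x ^ 2 * z ^ 8 + (105 : E) * x ^ 2 * z ^ 9 + (-12 : E) * x ^ 2 * z ^ 10 + (12 : E) * x ^ 2 * y + (-180 : E) * x ^ 2 * y * z ^ 3 + (630 : E) * x ^ 2 * y * z ^ 4 + (-1134 : E) * x ^ 2 * y * z ^ 5 + (1260 : E) * x ^ 2 * y * z ^ 6 + (-900 : E) * x ^ 2 * y * z ^ 7 + (405 : E) * x ^ 2 * y * z ^ 8 + (-105 : E) * x ^ 2 * y * z ^ 9 + (12 : E) * x ^ 2 * y * z ^ 10 + (-180 : E) * x ^ 2 * y ^ 3 + (180 : E) * x ^ 2 * y ^ 3 * z + (630 : E) * x ^ 2 * y ^ 4 + (-630 : E) * x ^ 2 * y ^ 4 * z + (-1134 : E) * x ^ 2 * y ^ 5 + (1134 : E) * x ^ 2 * y ^ 5 * z + (1260 : E) * x ^ 2 * y ^ 6 + (-1260 : E) * x ^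 2 * y ^ 6 * z + (-900 : E) * x ^ 2 * y ^ 7 + (900 : E) * x ^ 2 * y ^ 7 * z + (405 : E) * x ^ 2 * y ^ 8 + (-405 : E) * x ^ 2 * y ^ 8 * z + (-105 : E) * x ^ 2 * y ^ 9 + (105 : E) * x ^ 2 * y ^ 9 * z + (12 : E) * x ^ 2 * y ^ 10 + (-12 : E) * x ^ 2 * y ^ 10 * z + (68 : E) * x ^ 3 * z + (-180 : E) * x ^ 3 * z ^ 2 + (840 : E) * x ^ 3 * z ^ 4 + (-2016 : E) * x ^ 3 * z ^ 5 + (2520 : E) * x ^ 3 * z ^ 6 + (-1920 : E) * x ^ 3 * z ^ 7 + (900 : E) * x ^ 3 * z ^ 8 + (-240 : E) * x ^ 3 * z ^ 9 + (28 : E) * x ^ 3 * z ^ 10 + (-68 : E) * x ^ 3 * y + (180 : E) * x ^ 3 * y * z ^ 2 + (-840 : E) * x ^ 3 * y * z ^ 4 + (2016 : E) * x ^ 3 * y * z ^ 5 + (-2520 : E) * x ^ 3 * y * z ^ 6 + (1920 : E) * x ^ 3 * y * z ^ 7 + (-900 : E) * x ^ 3 * y * z ^ 8 + (240 : E) * x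 ^ 3 * y * z ^ 9 + (-28 : E) * x ^ 3 * y * z ^ 10 + (180 : E) * x ^ 3 * y ^ 2 + (-180 : E) * x ^ 3 * y ^ 2 * z + (-840 : E) * x ^ 3 * y ^ 4 + (840 : E) * x ^ 3 * y ^ 4 * z + (2016 : E) * x ^ 3 * y ^ 5 + (-2016 : E) * x ^ 3 * y ^ 5 * z + (-2520 : E) * x ^ 3 * y ^ 6 + (2520 : E) * x ^ 3 * y ^ 6 * z + (1920 : E) * x ^ 3 * y ^ 7 + (-1920 : E) * x ^ 3 * y ^ 7 * z + (-900 : E) * x ^ 3 * y ^ 8 + (900 : E) * x ^ 3 * y ^ 8 * z + (240 : E) * x ^ 3 * y ^ 9 + (-240 : E) * x ^ 3 * y ^ 9 * z + (-28 : E) * x ^ 3 * y ^ 10 + (28 : E) * x ^ 3 * y ^ 10 * z + (-182 : E) * x ^ 4 * z + (630 : E) * x ^ 4 * z ^ 2 + (-840 : E) * x ^ 4 * z ^ 3 + (1764 : E) * x ^ 4 * z ^ 5 + (-2940 : E) * x ^ 4 * z ^ 6 + (2520 : E) * x ^ 4 * z ^ 7 + (-1260 : E) * x ^ 4 * z ^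 8 + (350 : E) * x ^ 4 * z ^ 9 + (-42 : E) * x ^ 4 * z ^ 10 + (182 : E) * x ^ 4 * y + (-630 : E) * x ^ 4 * y * z ^ 2 + (840 : E) * x ^ 4 * y * z ^ 3 + (-1764 : E) * x ^ 4 * y * z ^ 5 + (2940 : E) * x ^ 4 * y * z ^ 6 + (-2520 : E) * x ^ 4 * y * z ^ 7 + (1260 : E) * x ^ 4 * y * z ^ 8 + (-350 : E) * x ^ 4 * y * z ^ 9 + (42 : E) * x ^ 4 * y * z ^ 10 + (-630 : E) * x ^ 4 * y ^ 2 + (630 : E) * x ^ 4 * y ^ 2 * z + (840 : E) * x ^ 4 * y ^ 3 + (-840 : E) * x ^ 4 * y ^ 3 * z + (-1764 : E) * x ^ 4 * y ^ 5 + (1764 : E) * x ^ 4 * y ^ 5 * z + (2940 : E) * x ^ 4 * y ^ 6 + (-2940 : E) * x ^ 4 * y ^ 6 * z + (-2520 : E) * x ^ 4 * y ^ 7 + (2520 : E) * x ^ 4 * y ^ 7 * z + (1260 : E) * x ^ 4 * y ^ 8 + (-1260 : E) * x ^ 4 * y ^ 8 * z + (-350 : E) * x ^ 4 * y ^ 9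 + (350 : E) * x ^ 4 * y ^ 9 * z + (42 : E) * x ^ 4 * y ^ 10 + (-42 : E) * x ^ 4 * y ^ 10 * z + (294 : E) * x ^ 5 * z + (-1134 : E) * x ^ 5 * z ^ 2 + (2016 : E) * x ^ 5 * z ^ 3 + (-1764 : E) * x ^ 5 * z ^ 4 + (1764 : E) * x ^ 5 * z ^ 6 + (-2016 : E) * x ^ 5 * z ^ 7 + (1134 : E) * x ^ 5 * z ^ 8 + (-336 : E) * x ^ 5 * z ^ 9 + (42 : E) * x ^ 5 * z ^ 10 + (-294 : E) * x ^ 5 * y + (1134 : E) * x ^ 5 * y * z ^ 2 + (-2016 : E) * x ^ 5 * y * z ^ 3 + (1764 : E) * x ^ 5 * y * z ^ 4 + (-1764 : E) * x ^ 5 * y * z ^ 6 + (2016 : E) * x ^ 5 * y * z ^ 7 + (-1134 : E) * x ^ 5 * y * z ^ 8 + (336 : E) * x ^ 5 * y * z ^ 9 + (-42 : E) * x ^ 5 * y * z ^ 10 + (1134 : E) * x ^ 5 * y ^ 2 + (-1134 : E) * x ^ 5 * y ^ 2 * z + (-2016 : E) * x ^ 5 * y ^ 3 + (2016 : E) * x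 ^ 5 * y ^ 3 * z + (1764 : E) * x ^ 5 * y ^ 4 + (-1764 : E) * x ^ 5 * y ^ 4 * z + (-1764 : E) * x ^ 5 * y ^ 6 + (1764 : E) * x ^ 5 * y ^ 6 * z + (2016 : E) * x ^ 5 * y ^ 7 + (-2016 : E) * x ^ 5 * y ^ 7 * z + (-1134 : E) * x ^ 5 * y ^ 8 + (1134 : E) * x ^ 5 * y ^ 8 * z + (336 : E) * x ^ 5 * y ^ 9 + (-336 : E) * x ^ 5 * y ^ 9 * z + (-42 : E) * x ^ 5 * y ^ 10 + (42 : E) * x ^ 5 * y ^ 10 * z + (-308 : E) * x ^ 6 * z + (1260 : E) * x ^ 6 * z ^ 2 + (-2520 : E) * x ^ 6 * z ^ 3 + (2940 : E) * x ^ 6 * z ^ 4 + (-1764 : E) * x ^ 6 * z ^ 5 + (840 : E) * x ^ 6 * z ^ 7 + (-630 : E) * x ^ 6 * z ^ 8 + (210 : E) * x ^ 6 * z ^ 9 + (-28 : E) * x ^ 6 * z ^ 10 + (308 : E) * x ^ 6 * y + (-1260 : E) * x ^ 6 * y * z ^ 2 + (2520 : E) * x ^ 6 * y * z ^ 3 +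 (-2940 : E) * x ^ 6 * y * z ^ 4 + (1764 : E) * x ^ 6 * y * z ^ 5 + (-840 : E) * x ^ 6 * y * z ^ 7 + (630 : E) * x ^ 6 * y * z ^ 8 + (-210 : E) * x ^ 6 * y * z ^ 9 + (28 : E) * x ^ 6 * y * z ^ 10 + (-1260 : E) * x ^ 6 * y ^ 2 + (1260 : E) * x ^ 6 * y ^ 2 * z + (2520 : E) * x ^ 6 * y ^ 3 + (-2520 : E) * x ^ 6 * y ^ 3 * z + (-2940 : E) * x ^ 6 * y ^ 4 + (2940 : E) * x ^ 6 * y ^ 4 * z + (1764 : E) * x ^ 6 * y ^ 5 + (-1764 : E) * x ^ 6 * y ^ 5 * z + (-840 : E) * x ^ 6 * y ^ 7 + (840 : E) * x ^ 6 * y ^ 7 * z + (630 : E) * x ^ 6 * y ^ 8 + (-630 : E) * x ^ 6 * y ^ 8 * z + (-210 : E) * x ^ 6 * y ^ 9 + (210 : E) * x ^ 6 * y ^ 9 * z + (28 : E) * x ^ 6 * y ^ 10 + (-28 : E) * x ^ 6 * y ^ 10 * z + (212 : E) * x ^ 7 * z + (-900 : E) * x ^ 7 * z ^ 2 + (1920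 : E) * x ^ 7 * z ^ 3 + (-2520 : E) * x ^ 7 * z ^ 4 + (2016 : E) * x ^ 7 * z ^ 5 + (-840 : E) * x ^ 7 * z ^ 6 + (180 : E) * x ^ 7 * z ^ 8 + (-80 : E) * x ^ 7 * z ^ 9 + (12 : E) * x ^ 7 * z ^ 10 + (-212 : E) * x ^ 7 * y + (900 : E) * x ^ 7 * y * z ^ 2 + (-1920 : E) * x ^ 7 * y * z ^ 3 + (2520 : E) * x ^ 7 * y * z ^ 4 + (-2016 : E) * x ^ 7 * y * z ^ 5 + (840 : E) * x ^ 7 * y * z ^ 6 + (-180 : E) * x ^ 7 * y * z ^ 8 + (80 : E) * x ^ 7 * y * z ^ 9 + (-12 : E) * x ^ 7 * y * z ^ 10 + (900 : E) * x ^ 7 * y ^ 2 + (-900 : E) * x ^ 7 * y ^ 2 * z + (-1920 : E) * x ^ 7 * y ^ 3 + (1920 : E) * x ^ 7 * y ^ 3 * z + (2520 : E) * x ^ 7 * y ^ 4 + (-2520 : E) * x ^ 7 * y ^ 4 * z + (-2016 : E) * x ^ 7 * y ^ 5 + (2016 : E) * x ^ 7 * y ^ 5 * z + (840 : E) * x ^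 7 * y ^ 6 + (-840 : E) * x ^ 7 * y ^ 6 * z + (-180 : E) * x ^ 7 * y ^ 8 + (180 : E) * x ^ 7 * y ^ 8 * z + (80 : E) * x ^ 7 * y ^ 9 + (-80 : E) * x ^ 7 * y ^ 9 * z + (-12 : E) * x ^ 7 * y ^ 10 + (12 : E) * x ^ 7 * y ^ 10 * z + (-93 : E) * x ^ 8 * z + (405 : E) * x ^ 8 * z ^ 2 + (-900 : E) * x ^ 8 * z ^ 3 + (1260 : E) * x ^ 8 * z ^ 4 + (-1134 : E) * x ^ 8 * z ^ 5 + (630 : E) * x ^ 8 * z ^ 6 + (-180 : E) * x ^ 8 * z ^ 7 + (15 : E) * x ^ 8 * z ^ 9 + (-3 : E) * x ^ 8 * z ^ 10 + (93 : E) * x ^ 8 * y + (-405 : E) * x ^ 8 * y * z ^ 2 + (900 : E) * x ^ 8 * y * z ^ 3 + (-1260 : E) * x ^ 8 * y * z ^ 4 + (1134 : E) * x ^ 8 * y * z ^ 5 + (-630 : E) * x ^ 8 * y * z ^ 6 + (180 : E) * x ^ 8 * y * z ^ 7 + (-15 : E) * x ^ 8 * y * z ^ 9 + (3 : E) * x ^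 8 * y * z ^ 10 + (-405 : E) * x ^ 8 * y ^ 2 + (405 : E) * x ^ 8 * y ^ 2 * z + (900 : E) * x ^ 8 * y ^ 3 + (-900 : E) * x ^ 8 * y ^ 3 * z + (-1260 : E) * x ^ 8 * y ^ 4 + (1260 : E) * x ^ 8 * y ^ 4 * z + (1134 : E) * x ^ 8 * y ^ 5 + (-1134 : E) * x ^ 8 * y ^ 5 * z + (-630 : E) * x ^ 8 * y ^ 6 + (630 : E) * x ^ 8 * y ^ 6 * z + (180 : E) * x ^ 8 * y ^ 7 + (-180 : E) * x ^ 8 * y ^ 7 * z + (-15 : E) * x ^ 8 * y ^ 9 + (15 : E) * x ^ 8 * y ^ 9 * z + (3 : E) * x ^ 8 * y ^ 10 + (-3 : E) * x ^ 8 * y ^ 10 * z + (24 : E) * x ^ 9 * z + (-105 : E) * x ^ 9 * z ^ 2 + (240 : E) * x ^ 9 * z ^ 3 + (-350 : E) * x ^ 9 * z ^ 4 + (336 : E) * x ^ 9 * z ^ 5 + (-210 : E) * x ^ 9 * z ^ 6 + (80 : E) * x ^ 9 * z ^ 7 + (-15 : E) * x ^ 9 * z ^ 8 + (-24 : E) *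 x ^ 9 * y + (105 : E) * x ^ 9 * y * z ^ 2 + (-240 : E) * x ^ 9 * y * z ^ 3 + (350 : E) * x ^ 9 * y * z ^ 4 + (-336 : E) * x ^ 9 * y * z ^ 5 + (210 : E) * x ^ 9 * y * z ^ 6 + (-80 : E) * x ^ 9 * y * z ^ 7 + (15 : E) * x ^ 9 * y * z ^ 8 + (105 : E) * x ^ 9 * y ^ 2 + (-105 : E) * x ^ 9 * y ^ 2 * z + (-240 : E) * x ^ 9 * y ^ 3 + (240 : E) * x ^ 9 * y ^ 3 * z + (350 : E) * x ^ 9 * y ^ 4 + (-350 : E) * x ^ 9 * y ^ 4 * z + (-336 : E) * x ^ 9 * y ^ 5 + (336 : E) * x ^ 9 * y ^ 5 * z + (210 : E) * x ^ 9 * y ^ 6 + (-210 : E) * x ^ 9 * y ^ 6 * z + (-80 : E) * x ^ 9 * y ^ 7 + (80 : E) * x ^ 9 * y ^ 7 * z + (15 : E) * x ^ 9 * y ^ 8 + (-15 : E) * x ^ 9 * y ^ 8 * z + (-3 : E) * x ^ 10 * z + (12 : E) * x ^ 10 * z ^ 2 + (-28 : E) * x ^ 10 * z ^ 3 + (42 :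 E) * x ^ 10 * z ^ 4 + (-42 : E) * x ^ 10 * z ^ 5 + (28 : E) * x ^ 10 * z ^ 6 + (-12 : E) * x ^ 10 * z ^ 7 + (3 : E) * x ^ 10 * z ^ 8 + (3 : E) * x ^ 10 * y + (-12 : E) * x ^ 10 * y * z ^ 2 + (28 : E) * x ^ 10 * y * z ^ 3 + (-42 : E) * x ^ 10 * y * z ^ 4 + (42 : E) * x ^ 10 * y * z ^ 5 + (-28 : E) * x ^ 10 * y * z ^ 6 + (12 : E) * x ^ 10 * y * z ^ 7 + (-3 : E) * x ^ 10 * y * z ^ 8 + (-12 : E) * x ^ 10 * y ^ 2 + (12 : E) * x ^ 10 * y ^ 2 * z + (28 : E) * x ^ 10 * y ^ 3 + (-28 : E) * x ^ 10 * y ^ 3 * z + (-42 : E) * x ^ 10 * y ^ 4 + (42 : E) * x ^ 10 * y ^ 4 * z + (42 : E) * x ^ 10 * y ^ 5 + (-42 : E) * x ^ 10 * y ^ 5 * z + (-28 : E) * x ^ 10 * y ^ 6 + (28 : E) * x ^ 10 * y ^ 6 * z + (12 : E) * x ^ 10 * y ^ 7 + (-12 : E) * x ^ 10 * y ^ 7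 * z + (-3 : E) * x ^ 10 * y ^ 8 + (3 : E) * x ^ 10 * y ^ 8 * z) * h3

/-- vanishing of the 4×4 determinant is equivalent to vanishing of
the 2×2 determinant. -/
theorem stmt13 {E : Type*} [Field E] [Fintype E] (m : ℕ) (hm : 0 < m)
    (hE : Fintype.card E = (3 ^ m) ^ 2)
    (x y z : E) (hx : x ^ (3 ^ m + 1) = 1) (hy : y ^ (3 ^ m + 1) = 1)
    (hz : z ^ (3 ^ m + 1) = 1)
    (hx1 : x ≠ 1) (hy1 : y ≠ 1) (hz1 : z ≠ 1)
    (hxy : x ≠ y) (hxz : x ≠ z) (hyz : y ≠ z) :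
    Matrix.det !![x ^ 4, y ^ 4, z ^ 4, 1;
                  x ^ 5, y ^ 5, z ^ 5, 1;
                  x ^ (-5 : ℤ), y ^ (-5 : ℤ), z ^ (-5 : ℤ), 1;
                  x ^ (-4 : ℤ), y ^ (-4 : ℤ), z ^ (-4 : ℤ), 1] = 0 ↔
    ((y - 1) ^ 9 - (x - 1) ^ 9) * ((z - 1) ^ 8 - (x - 1) ^ 8) -
      ((z - 1) ^ 9 - (x - 1) ^ 9) * ((y - 1) ^ 8 - (x - 1) ^ 8) = 0 := by
  -- characteristic 3
  have h3 : (3 : E) = 0 := by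
    obtain ⟨n, hp, hcard⟩ := FiniteField.card E (ringChar E)
    have hpow : (ringChar E) ^ (n : ℕ) = 3 ^ (2 * m) := by
      rw [← hcard, hE]; ring
    have hdvd : ringChar E ∣ 3 ^ (2 * m) := hpow ▸ dvd_pow_self _ n.pos.ne'
    have h33 : ringChar E ∣ 3 := hp.dvd_of_dvd_pow hdvd
    have hch : ringChar E = 3 := (Nat.prime_dvd_prime_iff_eq hp (by norm_num)).mp h33
    haveI : CharP E 3 := hch ▸ ringChar.charP E
    exact_mod_cast CharP.cast_eq_zero E 3
  -- nonvanishing facts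
  have hx0 : x ≠ 0 := by
    rintro rfl
    rw [zero_pow (by positivity)] at hx
    exact zero_ne_one hx
  have hy0 : y ≠ 0 := by
    rintro rfl
    rw [zero_pow (by positivity)] at hy
    exact zero_ne_one hy
  have hz0 : z ≠ 0 := by
    rintro rfl
    rw [zero_pow (by positivity)] at hz
    exact zero_ne_one hz
  have hxyz5 : (x * y * z) ^ 5 ≠ 0 := pow_ne_zero _ (mul_ne_zero (mul_ne_zero hx0 hy0) hz0)
  have ex : x ^ (-5 : ℤ) = (x ^ 5)⁻¹ := by
    rw [zpow_neg]; norm_cast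
  have ey : y ^ (-5 : ℤ) = (y ^ 5)⁻¹ := by
    rw [zpow_neg]; norm_cast
  have ez : z ^ (-5 : ℤ) = (z ^ 5)⁻¹ := by
    rw [zpow_neg]; norm_cast
  have ex4 : x ^ (-4 : ℤ) = x * (x ^ 5)⁻¹ := by
    rw [show (-4 : ℤ) = 1 + -5 by norm_num, zpow_add₀ hx0, zpow_one, ex]
  have ey4 : y ^ (-4 : ℤ) = y * (y ^ 5)⁻¹ := by
    rw [show (-4 : ℤ) = 1 + -5 by norm_num, zpow_add₀ hy0, zpow_one, ey]
  have ez4 : z ^ (-4 : ℤ) = z * (z ^ 5)⁻¹ := by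
    rw [show (-4 : ℤ) = 1 + -5 by norm_num, zpow_add₀ hz0, zpow_one, ez]
  have ha : x ^ 5 * (x ^ 5)⁻¹ = 1 := mul_inv_cancel₀ (pow_ne_zero 5 hx0)
  have hb : y ^ 5 * (y ^ 5)⁻¹ = 1 := mul_inv_cancel₀ (pow_ne_zero 5 hy0)
  have hc : z ^ 5 * (z ^ 5)⁻¹ = 1 := mul_inv_cancel₀ (pow_ne_zero 5 hz0)
  have scal : (x * y * z) ^ 5 *
      Matrix.det !![x ^ 4, y ^ 4, z ^ 4, 1;
                  x ^ 5, y ^ 5, z ^ 5, 1;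
                  x ^ (-5 : ℤ), y ^ (-5 : ℤ), z ^ (-5 : ℤ), 1;
                  x ^ (-4 : ℤ), y ^ (-4 : ℤ), z ^ (-4 : ℤ), 1] =
      Matrix.det !![x ^ 9, y ^ 9, z ^ 9, 1;
                  x ^ 10, y ^ 10, z ^ 10, 1;
                  1, 1, 1, 1;
                  x, y, z, 1] := by
    simp only [Matrix.det_succ_row_zero, Fin.sum_univ_succ, Matrix.submatrix_apply]
    simp [Fin.succAbove, Fin.lt_def, ex, ey, ez, ex4, ey4, ez4]
    linear_combination ((1 : E) * y ^ 6 * z ^ 9 * (y ^ 5)⁻¹ + (-1 : E) * y ^ 6 * z ^ 10 * (y ^ 5)⁻¹ + (-1 : E) * y ^ 9 * z ^ 6 * (z ^ 5)⁻¹ + (1 : E) * y ^ 9 * z ^ 10 + (1 : E) * y ^ 10 * z ^ 6 * (z ^ 5)⁻¹ + (-1 : E) * y ^ 10 * z ^ 9 + (-1 : E) * x * y ^ 5 * z ^ 9 * (y ^ 5)⁻¹ + (1 : E) * x * y ^ 5 * z ^ 10 * (y ^ 5)⁻¹ + (1 : E) * x * y ^ 9 * z ^ 5 * (z ^ 5)⁻¹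 + (-1 : E) * x * y ^ 9 * z ^ 10 + (-1 : E) * x * y ^ 10 * z ^ 5 * (z ^ 5)⁻¹ + (1 : E) * x * y ^ 10 * z ^ 9) * ha + ((1 : E) * y * z ^ 9 + (-1 : E) * y * z ^ 10 + (-1 : E) * x * z ^ 9 + (1 : E) * x * z ^ 10 + (1 : E) * x ^ 9 * z ^ 6 * (z ^ 5)⁻¹ + (-1 : E) * x ^ 9 * z ^ 10 + (-1 : E) * x ^ 9 * y * z ^ 5 * (z ^ 5)⁻¹ + (1 : E) * x ^ 9 * y * z ^ 10 + (-1 : E) * x ^ 10 * z ^ 6 * (z ^ 5)⁻¹ + (1 : E) * x ^ 10 * z ^ 9 + (1 : E) * x ^ 10 * y * z ^ 5 * (z ^ 5)⁻¹ + (-1 : E) * x ^ 10 * y * z ^ 9) * hb + ((-1 : E) * y ^ 9 * z + (1 : E) * y ^ 10 * z + (1 : E) * x * y ^ 9 + (-1 : E) * x * y ^ 10 + (1 : E) * x ^ 9 * z + (-1 : E) * x ^ 9 * y + (1 : E) * x ^ 9 * y ^ 10 + (-1 : E) * x ^ 9 * y ^ 10 * z + (-1 : E) * x ^ 10 * z +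 (1 : E) * x ^ 10 * y + (-1 : E) * x ^ 10 * y ^ 9 + (1 : E) * x ^ 10 * y ^ 9 * z) * hc
  have main : (x * y * z) ^ 5 *
      Matrix.det !![x ^ 4, y ^ 4, z ^ 4, 1;
                  x ^ 5, y ^ 5, z ^ 5, 1;
                  x ^ (-5 : ℤ), y ^ (-5 : ℤ), z ^ (-5 : ℤ), 1;
                  x ^ (-4 : ℤ), y ^ (-4 : ℤ), z ^ (-4 : ℤ), 1] =
      (x - 1) * (y - 1) * (z - 1) *
        (((y - 1) ^ 9 - (x - 1) ^ 9) * ((z - 1) ^ 8 - (x - 1) ^ 8) -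
          ((z - 1) ^ 9 - (x - 1) ^ 9) * ((y - 1) ^ 8 - (x - 1) ^ 8)) := by
    rw [scal, detM_eq h3]
  constructor
  · intro h
    rw [h, mul_zero] at main
    rcases mul_eq_zero.mp main.symm with h1 | h2
    · exfalso
      rcases mul_eq_zero.mp h1 with h1 | h1
      · rcases mul_eq_zero.mp h1 with h1 | h1
        · exact hx1 (sub_eq_zero.mp h1)
        · exact hy1 (sub_eq_zero.mp h1)
      · exact hz1 (sub_eq_zero.mp h1)
    · exact h2
  · intro h
    rw [h, mul_zero] at main
    exact (mul_eq_zero.mp main).resolve_left hxyz5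
end

section
/- Let q = 3^m with m an odd positive integer and let x, y, z be pairwise distinct elements of U_{q+1}\{1} in F_{q^2}. With X = x-1, Y = y-1, Z = z-1, the equation (Y^9 - X^9)(Z^8 - X^8) - (Z^9 - X^9)(Y^8 - X^8) = 0 holds in F_{q^2} if and only if (y-1)(z-x) = -(x-1)(z-y) holds in F_{q^2}. -/
/-- For odd `m`, `3 ^ m - 1 ≡ 2 (mod 8)`. -/
theorem stmt14_mod (m : ℕ) (hm : Odd m) : (3 ^ m - 1) % 8 = 2 := by
  have hmod : 3 ^ m % 8 = 3 := by
    obtain ⟨k, rfl⟩ := hm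
    rw [pow_succ, pow_mul, Nat.mul_mod, Nat.pow_mod]
    norm_num
  generalize hg : 3 ^ m = t at hmod ⊢
  omega

/-- Key polynomial identity in characteristic 3. -/
theorem stmt14_key {E : Type*} [CommRing E] (h3 : (3 : E) = 0) (a b c : E) :
    c * ((b ^ 9 - a ^ 9) * (c ^ 8 - a ^ 8) - (c ^ 9 - a ^ 9) * (b ^ 8 - a ^ 8)) =
      (b - c) * (c - a) * ((b * (c - a)) ^ 8 - (a * (c - b)) ^ 8) := by
  linear_combination (((-3):E)*a*b^8*c^9 + (3:E)*a*b^9*c^8 + (12:E)*a^2*b^8*c^8 + ((-12):E)*a^2*b^9*c^7 + ((-28):E)*a^3*b^8*c^7 + (28:E)*a^3*b^9*c^6 + (42:E)*a^4*b^8*c^6 + ((-42):E)*a^4*b^9*c^5 + ((-42):E)*a^5*b^8*c^5 + (42:E)*a^5*b^9*c^4 + (28:E)*a^6*b^8*c^4 + ((-28):E)*a^6*b^9*c^3 + ((-12):E)*a^7*b^8*c^3 + (12:E)*a^7*b^9*c^2 + (3:E)*a^8*b*c^9 + ((-12):E)*a^8*b^2*c^8 + (28:E)*a^8*b^3*c^7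 + ((-42):E)*a^8*b^4*c^6 + (42:E)*a^8*b^5*c^5 + ((-28):E)*a^8*b^6*c^4 + (12:E)*a^8*b^7*c^3 + ((-3):E)*a^8*b^9*c + ((-3):E)*a^9*b*c^8 + (12:E)*a^9*b^2*c^7 + ((-28):E)*a^9*b^3*c^6 + (42:E)*a^9*b^4*c^5 + ((-42):E)*a^9*b^5*c^4 + (28:E)*a^9*b^6*c^3 + ((-12):E)*a^9*b^7*c^2 + (3:E)*a^9*b^8*c) * h3

/-- with `X = x-1`, `Y = y-1`, `Z = z-1`, the vanishing of the 2×2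
determinant is equivalent to `(y-1)(z-x) = -(x-1)(z-y)`. -/
theorem stmt14 {E : Type*} [Field E] [Fintype E] (m : ℕ) (hm : Odd m)
    (hE : Fintype.card E = (3 ^ m) ^ 2)
    (x y z : E) (hx : x ^ (3 ^ m + 1) = 1) (hy : y ^ (3 ^ m + 1) = 1)
    (hz : z ^ (3 ^ m + 1) = 1)
    (hx1 : x ≠ 1) (hy1 : y ≠ 1) (hz1 : z ≠ 1)
    (hxy : x ≠ y) (hxz : x ≠ z) (hyz : y ≠ z) :
    ((y - 1) ^ 9 - (x - 1) ^ 9) * ((z - 1) ^ 8 - (x - 1) ^ 8) -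
      ((z - 1) ^ 9 - (x - 1) ^ 9) * ((y - 1) ^ 8 - (x - 1) ^ 8) = 0 ↔
    (y - 1) * (z - x) = -((x - 1) * (z - y)) := by
  -- characteristic is 3
  have hp3 : CharP E 3 := by
    have hchar := ringChar.charP E
    obtain ⟨n, hprime, hcard⟩ := FiniteField.card E (ringChar E)
    have h3 : ringChar E = 3 := by
      have hdvd : ringChar E ∣ (3 ^ m) ^ 2 := by
        rw [← hE, hcard]
        exact dvd_pow_self _ n.pos.ne'
      have h1 := hprime.dvd_of_dvd_pow (hprime.dvd_of_dvd_pow hdvd)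
      exact (Nat.prime_dvd_prime_iff_eq hprime (by norm_num)).mp h1
    rwa [h3] at hchar
  haveI := hp3
  have h3 : (3 : E) = 0 := by exact_mod_cast CharP.cast_eq_zero E 3
  set q : ℕ := 3 ^ m with hq
  -- nonzero elements
  have hx0 : x ≠ 0 := by rintro rfl; simp at hx
  have hy0 : y ≠ 0 := by rintro rfl; simp at hy
  have hz0 : z ≠ 0 := by rintro rfl; simp at hz
  have hX : x - 1 ≠ 0 := sub_ne_zero.mpr hx1
  have hY : y - 1 ≠ 0 := sub_ne_zero.mpr hy1
  have hZ : z - 1 ≠ 0 := sub_ne_zero.mpr hz1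
  have hYZ : y - z ≠ 0 := sub_ne_zero.mpr hyz
  have hZX : z - x ≠ 0 := sub_ne_zero.mpr (Ne.symm hxz)
  have hZY : z - y ≠ 0 := sub_ne_zero.mpr (Ne.symm hyz)
  have hYX : y - x ≠ 0 := sub_ne_zero.mpr (Ne.symm hxy)
  set N : E := (y - 1) * (z - x) with hN
  set D : E := (x - 1) * (z - y) with hD
  have hN0 : N ≠ 0 := mul_ne_zero hY hZX
  have hD0 : D ≠ 0 := mul_ne_zero hX hZY
  -- the key identity
  have hkey : (z - 1) * (((y - 1) ^ 9 - (x - 1) ^ 9) * ((z - 1) ^ 8 - (x - 1) ^ 8) -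
      ((z - 1) ^ 9 - (x - 1) ^ 9) * ((y - 1) ^ 8 - (x - 1) ^ 8)) =
      (y - z) * (z - x) * (N ^ 8 - D ^ 8) := by
    have := stmt14_key h3 (x - 1) (y - 1) (z - 1)
    rw [hN, hD]
    linear_combination this
  -- reduce to N ^ 8 = D ^ 8
  have main : (((y - 1) ^ 9 - (x - 1) ^ 9) * ((z - 1) ^ 8 - (x - 1) ^ 8) -
      ((z - 1) ^ 9 - (x - 1) ^ 9) * ((y - 1) ^ 8 - (x - 1) ^ 8) = 0) ↔ N ^ 8 = D ^ 8 := by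
    constructor
    · intro h
      rw [h, mul_zero] at hkey
      have := (mul_eq_zero.mp hkey.symm).resolve_left
        (mul_ne_zero hYZ hZX)
      exact sub_eq_zero.mp this
    · intro h
      have : (y - z) * (z - x) * (N ^ 8 - D ^ 8) = 0 := by rw [h]; ring
      rw [← hkey] at this
      exact (mul_eq_zero.mp this).resolve_left hZ
  rw [main]
  constructor
  · intro h8
    -- N and D are "conjugate-compatible": N^q * (x*y*z) = N, D^q * (x*y*z) = D
    have ex : x ^ q * x = 1 := by rw [← pow_succ]; exact hx
    have ey : y ^ q * y = 1 := by rw [← pow_succ]; exact hy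
    have ez : z ^ q * z = 1 := by rw [← pow_succ]; exact hz
    have hNq : N ^ q * (x * y * z) = N := by
      rw [hN, mul_pow, hq, sub_pow_char_pow, sub_pow_char_pow]
      calc (y ^ 3 ^ m - 1 ^ 3 ^ m) * (z ^ 3 ^ m - x ^ 3 ^ m) * (x * y * z)
          = (y ^ 3 ^ m * y - y) * ((z ^ 3 ^ m * z) * x - (x ^ 3 ^ m * x) * z) := by ring
        _ = (1 - y) * (1 * x - 1 * z) := by rw [ex, ey, ez]
        _ = (y - 1) * (z - x) := by ring
    have hDq : D ^ q * (x * y * z) = D := by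
      rw [hD, mul_pow, hq, sub_pow_char_pow, sub_pow_char_pow]
      calc (x ^ 3 ^ m - 1 ^ 3 ^ m) * (z ^ 3 ^ m - y ^ 3 ^ m) * (x * y * z)
          = (x ^ 3 ^ m * x - x) * ((z ^ 3 ^ m * z) * y - (y ^ 3 ^ m * y) * z) := by ring
        _ = (1 - x) * (1 * y - 1 * z) := by rw [ex, ey, ez]
        _ = (x - 1) * (z - y) := by ring
    have hxyz0 : x * y * z ≠ 0 := mul_ne_zero (mul_ne_zero hx0 hy0) hz0
    have hcross : N ^ q * D = N * D ^ q :=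
      mul_right_cancel₀ hxyz0 (by linear_combination D * hNq - N * hDq)
    set Δ : E := N / D with hΔ
    have hΔ0 : Δ ≠ 0 := div_ne_zero hN0 hD0
    have hΔq : Δ ^ q = Δ := by
      rw [hΔ, div_pow, div_eq_div_iff (pow_ne_zero _ hD0) hD0]
      linear_combination hcross
    have hΔq1 : Δ ^ (q - 1) = 1 := by
      have hq1 : 1 ≤ q := Nat.one_le_pow _ _ (by norm_num)
      have : Δ ^ (q - 1) * Δ = 1 * Δ := by
        rw [← pow_succ, Nat.sub_add_cancel hq1, hΔq, one_mul]
      exact mul_right_cancel₀ hΔ0 this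
    have hΔ8 : Δ ^ 8 = 1 := by
      rw [hΔ, div_pow, h8, div_self (pow_ne_zero _ hD0)]
    -- gcd(q-1, 8) = 2 since q = 3^m, m odd
    have hgcd : Nat.gcd (q - 1) 8 = 2 := by
      show Nat.gcd (3 ^ m - 1) 8 = 2
      rw [Nat.gcd_comm, Nat.gcd_rec, stmt14_mod m hm]
      rfl
    have hΔ2 : Δ ^ 2 = 1 := by
      rw [← hgcd]
      exact pow_gcd_eq_one.mpr ⟨hΔq1, hΔ8⟩
    have hΔne1 : Δ ≠ 1 := by
      intro h1
      have : N = D := by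
        have := (div_eq_one_iff_eq hD0).mp (hΔ.symm.trans h1 : N / D = 1)
        exact this
      have h0 : (y - x) * (z - 1) = 0 := by
        rw [hN, hD] at this
        linear_combination this
      exact (mul_ne_zero hYX hZ) h0
    have : (Δ - 1) * (Δ + 1) = 0 := by linear_combination hΔ2
    rcases mul_eq_zero.mp this with h | h
    · exact absurd (sub_eq_zero.mp h) hΔne1
    · have hΔneg : Δ = -1 := by linear_combination h
      have hnd : N / D = -1 := hΔ.symm.trans hΔneg
      rw [div_eq_iff hD0] at hnd
      linear_combination hnd
  · intro h
    rw [h]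
    ring
end

section
/- Let q = 3^m with m odd, and let x, y, z ∈ U_{q+1}\{1} ⊆ F_{q^2} be pairwise distinct. If Δ := (y-1)(z-x)/((x-1)(z-y)) satisfies Δ^8 = 1, then Δ = -1. -/
/-- if `Δ = (y-1)(z-x)/((x-1)(z-y))` satisfies `Δ^8 = 1`,
then `Δ = -1`. -/
theorem stmt16 {E : Type*} [Field E] [Fintype E] (m : ℕ) (hm : Odd m)
    (hE : Fintype.card E = (3 ^ m) ^ 2)
    (x y z : E) (hx : x ^ (3 ^ m + 1) = 1) (hy : y ^ (3 ^ m + 1) = 1)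
    (hz : z ^ (3 ^ m + 1) = 1)
    (hx1 : x ≠ 1) (hy1 : y ≠ 1) (hz1 : z ≠ 1)
    (hxy : x ≠ y) (hxz : x ≠ z) (hyz : y ≠ z)
    (hΔ : ((y - 1) * (z - x) / ((x - 1) * (z - y))) ^ 8 = 1) :
    (y - 1) * (z - x) / ((x - 1) * (z - y)) = -1 := by
  have hm1 : 1 ≤ m := hm.pos
  -- characteristic is 3
  obtain ⟨p, hpc⟩ := CharP.exists E
  haveI := hpc
  have hp : p.Prime := CharP.char_is_prime E p
  obtain ⟨n, -, hn⟩ := FiniteField.card E p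
  have hp3 : p = 3 := by
    have hd : p ∣ 3 ^ (2 * m) := by
      have h1 : p ∣ p ^ (n : ℕ) := dvd_pow_self p n.pos.ne'
      rw [← hn, hE, ← pow_mul, mul_comm] at h1
      exact h1
    exact (Nat.prime_dvd_prime_iff_eq hp (by norm_num)).mp (hp.dvd_of_dvd_pow hd)
  subst hp3
  haveI : Fact (Nat.Prime 3) := ⟨hp⟩
  -- nonzero facts
  have hx0 : x ≠ 0 := by rintro rfl; simp at hx
  have hy0 : y ≠ 0 := by rintro rfl; simp at hy
  have hz0 : z ≠ 0 := by rintro rfl; simp at hz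
  have hN : (y - 1) * (z - x) ≠ 0 :=
    mul_ne_zero (sub_ne_zero.mpr hy1) (sub_ne_zero.mpr (Ne.symm hxz))
  have hD : (x - 1) * (z - y) ≠ 0 :=
    mul_ne_zero (sub_ne_zero.mpr hx1) (sub_ne_zero.mpr (Ne.symm hyz))
  have hDi : (x⁻¹ - 1) * (z⁻¹ - y⁻¹) ≠ 0 := by
    apply mul_ne_zero
    · rw [sub_ne_zero]; exact fun h => hx1 (by rw [← inv_inv x, h, inv_one])
    · rw [sub_ne_zero]; exact fun h => hyz (by rw [← inv_inv y, ← inv_inv z, h])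
  -- Frobenius-type identities
  have hxq : x ^ 3 ^ m = x⁻¹ :=
    eq_inv_of_mul_eq_one_left (by rw [← pow_succ]; exact hx)
  have hyq : y ^ 3 ^ m = y⁻¹ :=
    eq_inv_of_mul_eq_one_left (by rw [← pow_succ]; exact hy)
  have hzq : z ^ 3 ^ m = z⁻¹ :=
    eq_inv_of_mul_eq_one_left (by rw [← pow_succ]; exact hz)
  set Δ : E := (y - 1) * (z - x) / ((x - 1) * (z - y)) with hΔdef
  have hΔ0 : Δ ≠ 0 := div_ne_zero hN hD
  have key : Δ ^ 3 ^ m = Δ := by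
    rw [hΔdef, div_pow, mul_pow, mul_pow, sub_pow_char_pow, sub_pow_char_pow,
        sub_pow_char_pow, sub_pow_char_pow, one_pow, hxq, hyq, hzq,
        div_eq_div_iff hDi hD]
    field_simp
    ring
  have hq1 : 1 ≤ 3 ^ m := Nat.one_le_pow _ _ (by norm_num)
  have hpow : Δ ^ (3 ^ m - 1) = 1 := by
    have h2 : Δ ^ (3 ^ m - 1) * Δ = 1 * Δ := by
      rw [← pow_succ, Nat.sub_add_cancel hq1, key, one_mul]
    exact mul_right_cancel₀ hΔ0 h2
  have ho8 : orderOf Δ ∣ 8 := orderOf_dvd_of_pow_eq_one hΔ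
  have hoq : orderOf Δ ∣ 3 ^ m - 1 := orderOf_dvd_of_pow_eq_one hpow
  have hmod : 3 ^ m % 8 = 3 := by
    obtain ⟨k, rfl⟩ := hm
    have : (3:ℕ) ^ (2 * k + 1) = 9 ^ k * 3 := by rw [pow_succ, pow_mul]; norm_num
    rw [this, Nat.mul_mod, Nat.pow_mod]
    norm_num
  have hgcd : Nat.gcd 8 (3 ^ m - 1) = 2 := by
    rw [Nat.gcd_rec]
    have : (3 ^ m - 1) % 8 = 2 := by omega
    rw [this]
    decide
  have ho2 : orderOf Δ ∣ 2 := hgcd ▸ Nat.dvd_gcd ho8 hoq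
  have h2 : Δ ^ 2 = 1 := orderOf_dvd_iff_pow_eq_one.mp ho2
  have hfac : (Δ - 1) * (Δ + 1) = 0 := by linear_combination h2
  rcases mul_eq_zero.mp hfac with h | h
  · exfalso
    have hΔ1 : Δ = 1 := sub_eq_zero.mp h
    have hND : (y - 1) * (z - x) = (x - 1) * (z - y) := by
      rw [hΔdef, div_eq_one_iff_eq hD] at hΔ1
      exact hΔ1
    have : (y - x) * (z - 1) = 0 := by linear_combination hND
    rcases mul_eq_zero.mp this with h' | h'
    · exact hxy (sub_eq_zero.mp h').symm
    · exact hz1 (sub_eq_zero.mp h')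
  · exact eq_neg_of_add_eq_zero_left h
end

section
/- Let q = 3^m with m an odd positive integer. For any two distinct elements x, y ∈ U_{q+1}\{1} ⊆ F_{q^2}, there exists exactly one element z ∈ U_{q+1}\{x, y, 1} satisfying (y-1)(z-x) = -(x-1)(z-y) in F_{q^2}; namely z = -(x + y + xy)/(x + y + 1). -/
/-- for distinct `x, y ∈ U_{q+1} \ {1}` there is exactly one
`z ∈ U_{q+1} \ {x, y, 1}` with `(y-1)(z-x) = -(x-1)(z-y)`, namely
`z = -(x+y+xy)/(x+y+1)`. -/
theorem stmt17 {E : Type*} [Field E] [Fintype E] (m : ℕ) (hm : Odd m)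
    (hE : Fintype.card E = (3 ^ m) ^ 2)
    (x y : E) (hx : x ^ (3 ^ m + 1) = 1) (hy : y ^ (3 ^ m + 1) = 1)
    (hx1 : x ≠ 1) (hy1 : y ≠ 1) (hxy : x ≠ y) :
    (∃! z : E, z ^ (3 ^ m + 1) = 1 ∧ z ≠ x ∧ z ≠ y ∧ z ≠ 1 ∧
        (y - 1) * (z - x) = -((x - 1) * (z - y))) ∧
    ((-(x + y + x * y) / (x + y + 1)) ^ (3 ^ m + 1) = 1 ∧
      -(x + y + x * y) / (x + y + 1) ≠ x ∧
      -(x + y + x * y) / (x + y + 1) ≠ y ∧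
      -(x + y + x * y) / (x + y + 1) ≠ 1 ∧
      (y - 1) * (-(x + y + x * y) / (x + y + 1) - x) =
        -((x - 1) * (-(x + y + x * y) / (x + y + 1) - y))) := by
  classical
  -- characteristic 3
  haveI hchar : CharP E 3 := by
    haveI hc : CharP E (ringChar E) := ringChar.charP E
    obtain ⟨n, hp, hcard⟩ := FiniteField.card E (ringChar E)
    have h3' : ringChar E = 3 := by
      have hdvd : ringChar E ∣ 3 := by
        have : ringChar E ∣ 3 ^ (m * 2) := by
          rw [pow_mul, ← hE, hcard]
          exact dvd_pow_self _ n.pos.ne'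
        exact hp.dvd_of_dvd_pow this
      exact (Nat.prime_dvd_prime_iff_eq hp Nat.prime_three).mp hdvd
    rwa [h3'] at hc
  haveI : Fact (Nat.Prime 3) := ⟨by norm_num⟩
  have h3 : (3 : E) = 0 := by exact_mod_cast CharP.cast_eq_zero E 3
  have hx0 : x ≠ 0 := by intro h; rw [h] at hx; simp at hx
  have hy0 : y ≠ 0 := by intro h; rw [h] at hy; simp at hy
  have hxq : x ^ 3 ^ m = x⁻¹ := by
    exact eq_inv_of_mul_eq_one_left (by rw [← pow_succ]; exact hx)
  have hyq : y ^ 3 ^ m = y⁻¹ := by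
    exact eq_inv_of_mul_eq_one_left (by rw [← pow_succ]; exact hy)
  -- Frobenius
  set φ : E →+* E := iterateFrobenius E 3 m with hφdef
  have hq : ∀ a : E, φ a = a ^ 3 ^ m := fun a => iterateFrobenius_def 3 m a
  have hφx : φ x = x⁻¹ := by rw [hq, hxq]
  have hφy : φ y = y⁻¹ := by rw [hq, hyq]
  -- x + y + 1 ≠ 0
  have hD : x + y + 1 ≠ 0 := by
    intro hs
    have e1 := congrArg φ hs
    rw [map_add, map_add, map_one, map_zero, hφx, hφy] at e1
    field_simp at e1
    have hx1' : (x - 1) ^ 2 = 0 := by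
      linear_combination (x + 1) * hs - e1 - x * h3
    exact hx1 (sub_eq_zero.mp (pow_eq_zero_iff (n := 2) (by norm_num) |>.mp hx1'))
  -- x + y + xy ≠ 0
  have hN : x + y + x * y ≠ 0 := by
    intro hs
    have e1 := congrArg φ hs
    rw [map_add, map_add, map_mul, map_zero, hφx, hφy] at e1
    field_simp at e1
    exact hD (by linear_combination e1)
  set z₀ : E := -(x + y + x * y) / (x + y + 1) with hz₀def
  have hz0 : (x + y + 1) * z₀ = -(x + y + x * y) := by
    rw [hz₀def]; field_simp
  -- the defining equation is equivalent to the linear one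
  have key : ∀ z : E, (y - 1) * (z - x) = -((x - 1) * (z - y)) ↔
      (x + y + 1) * z = -(x + y + x * y) := by
    intro z
    constructor
    · intro h; linear_combination h + (z + x * y) * h3
    · intro h; linear_combination h - (z + x * y) * h3
  -- z₀ ≠ x, y, 1
  have hzx : z₀ ≠ x := by
    intro h
    rw [h] at hz0
    have : (x - 1) * (x - y) = 0 := by linear_combination hz0 - (x * y + x) * h3
    rcases mul_eq_zero.mp this with h' | h'
    · exact hx1 (sub_eq_zero.mp h')
    · exact hxy (sub_eq_zero.mp h')
  have hzy : z₀ ≠ y := by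
    intro h
    rw [h] at hz0
    have : (y - 1) * (y - x) = 0 := by linear_combination hz0 - (x * y + y) * h3
    rcases mul_eq_zero.mp this with h' | h'
    · exact hy1 (sub_eq_zero.mp h')
    · exact hxy (sub_eq_zero.mp h').symm
  have hz1 : z₀ ≠ 1 := by
    intro h
    rw [h, mul_one] at hz0
    have : (x - 1) * (y - 1) = 0 := by linear_combination hz0 - (x + y) * h3
    rcases mul_eq_zero.mp this with h' | h'
    · exact hx1 (sub_eq_zero.mp h')
    · exact hy1 (sub_eq_zero.mp h')
  -- z₀ ∈ U_{q+1}
  have hinv : x⁻¹ + y⁻¹ + 1 ≠ 0 := by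
    intro h
    have := mul_eq_zero_of_left h (x * y)
    field_simp at this
    exact hN (by linear_combination this)
  have hzpow : z₀ ^ 3 ^ m = -(x + y + 1) / (x + y + x * y) := by
    rw [← hq z₀, hz₀def, map_div₀, map_neg, map_add, map_add, map_mul,
      map_add, map_add, map_one, hφx, hφy]
    rw [div_eq_div_iff (by
      intro h
      apply hinv
      exact by linear_combination h) hN]
    field_simp
    ring
  have hzU : z₀ ^ (3 ^ m + 1) = 1 := by
    rw [pow_succ, hzpow, hz₀def]
    field_simp
  -- the equation holds for z₀
  have hzeq : (y - 1) * (z₀ - x) = -((x - 1) * (z₀ - y)) := (key z₀).mpr hz0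
  refine ⟨⟨z₀, ⟨hzU, hzx, hzy, hz1, hzeq⟩, ?_⟩, hzU, hzx, hzy, hz1, hzeq⟩
  rintro z ⟨-, -, -, -, heq⟩
  have h1 := (key z).mp heq
  exact mul_left_cancel₀ hD (h1.trans hz0.symm)
end

section
/- Let q = 3^m with m an odd positive integer and let x, y, z ∈ U_{q+1}\{1} ⊆ F_{q^2} be pairwise distinct. Then the system of linear equations a·x^4 + b·y^4 + c·z^4 + d = 0 and a·x^5 + b·y^5 + c·z^5 + d = 0 has a nonzero solution (a, b, c, d) ∈ F_q^4 if and only if the 4×4 determinant det[(x^4,y^4,z^4,1);(x^5,y^5,z^5,1);(x^{-5},y^{-5},z^{-5},1);(x^{-4},y^{-4},z^{-4},1)] vanishes in F_{q^2}. -/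
/-- the system `a·x⁴+b·y⁴+c·z⁴+d = 0`, `a·x⁵+b·y⁵+c·z⁵+d = 0` has a
nonzero solution with `a,b,c,d` in the Frobenius-fixed subfield `F_q` iff the
4×4 determinant vanishes. -/
theorem stmt18 {E : Type*} [Field E] [Fintype E] (m : ℕ) (hm : Odd m)
    (hE : Fintype.card E = (3 ^ m) ^ 2)
    (x y z : E) (hx : x ^ (3 ^ m + 1) = 1) (hy : y ^ (3 ^ m + 1) = 1)
    (hz : z ^ (3 ^ m + 1) = 1)
    (hx1 : x ≠ 1) (hy1 : y ≠ 1) (hz1 : z ≠ 1)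
    (hxy : x ≠ y) (hxz : x ≠ z) (hyz : y ≠ z) :
    (∃ a b c d : E,
        a ^ (3 ^ m) = a ∧ b ^ (3 ^ m) = b ∧ c ^ (3 ^ m) = c ∧ d ^ (3 ^ m) = d ∧
        ¬(a = 0 ∧ b = 0 ∧ c = 0 ∧ d = 0) ∧
        a * x ^ 4 + b * y ^ 4 + c * z ^ 4 + d = 0 ∧
        a * x ^ 5 + b * y ^ 5 + c * z ^ 5 + d = 0) ↔
    Matrix.det !![x ^ 4, y ^ 4, z ^ 4, 1;
                  x ^ 5, y ^ 5, z ^ 5, 1;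
                  x ^ (-5 : ℤ), y ^ (-5 : ℤ), z ^ (-5 : ℤ), 1;
                  x ^ (-4 : ℤ), y ^ (-4 : ℤ), z ^ (-4 : ℤ), 1] = 0 := by
  have hp3 : Fact (Nat.Prime 3) := ⟨by norm_num⟩
  set q : ℕ := 3 ^ m with hq
  -- characteristic 3
  have hchar3 : CharP E 3 := by
    obtain ⟨n, hp, hcard⟩ := FiniteField.card E (ringChar E)
    have hdvd : ringChar E ∣ 3 ^ (2 * m) := by
      have h1 : ringChar E ^ (n : ℕ) = 3 ^ (2 * m) := by
        rw [← hcard, hE, ← pow_mul, mul_comm]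
      exact h1 ▸ dvd_pow_self (ringChar E) n.ne_zero
    have h3 : ringChar E = 3 :=
      ((Nat.prime_dvd_prime_iff_eq hp (by norm_num)).mp (hp.dvd_of_dvd_pow hdvd))
    exact h3 ▸ ringChar.charP E
  -- the Frobenius ring hom a ↦ a^q
  let f : E →+* E := iterateFrobenius E 3 m
  have hf : ∀ a : E, f a = a ^ q := fun a => iterateFrobenius_def 3 m a
  have hqq : ∀ a : E, (a ^ q) ^ q = a := by
    intro a
    rw [← pow_mul, show q * q = Fintype.card E by rw [hE, sq]]
    exact FiniteField.pow_card a
  -- power facts for elements of U_{q+1}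
  have key : ∀ u : E, u ^ (q + 1) = 1 →
      ((u ^ (-4 : ℤ) = (u ^ 4)⁻¹) ∧ (u ^ (-5 : ℤ) = (u ^ 5)⁻¹) ∧
       (u ^ 4) ^ q = (u ^ 4)⁻¹ ∧ (u ^ 5) ^ q = (u ^ 5)⁻¹ ∧
       ((u ^ 4)⁻¹) ^ q = u ^ 4 ∧ ((u ^ 5)⁻¹) ^ q = u ^ 5) := by
    intro u hu
    have huq : u ^ q = u⁻¹ := by
      refine eq_inv_of_mul_eq_one_right ?_
      rw [mul_comm, ← pow_succ]; exact hu
    have h4 : u ^ (-4 : ℤ) = (u ^ 4)⁻¹ := by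
      rw [zpow_neg, ← zpow_natCast]; norm_num
    have h5 : u ^ (-5 : ℤ) = (u ^ 5)⁻¹ := by
      rw [zpow_neg, ← zpow_natCast]; norm_num
    refine ⟨h4, h5, ?_, ?_, ?_, ?_⟩
    · rw [pow_right_comm, huq, inv_pow]
    · rw [pow_right_comm, huq, inv_pow]
    · rw [← inv_pow, pow_right_comm, inv_pow, huq, inv_inv]
    · rw [← inv_pow, pow_right_comm, inv_pow, huq, inv_inv]
  obtain ⟨ex4, ex5, kx4, kx5, kx4', kx5'⟩ := key x hx
  obtain ⟨ey4, ey5, ky4, ky5, ky4', ky5'⟩ := key y hy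
  obtain ⟨ez4, ez5, kz4, kz5, kz4', kz5'⟩ := key z hz
  rw [ex4, ex5, ey4, ey5, ez4, ez5, ← Matrix.exists_mulVec_eq_zero_iff]
  constructor
  · rintro ⟨a, b, c, d, ha, hb, hc, hd, hne, h1, h2⟩
    -- conjugate equations
    have h3 : a * (x ^ 5)⁻¹ + b * (y ^ 5)⁻¹ + c * (z ^ 5)⁻¹ + d = 0 := by
      have e := congrArg f h2
      simp only [map_add, map_mul, map_zero] at e
      simp only [hf] at e
      rwa [ha, hb, hc, hd, kx5, ky5, kz5] at e
    have h4 : a * (x ^ 4)⁻¹ + b * (y ^ 4)⁻¹ + c * (z ^ 4)⁻¹ + d = 0 := by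
      have e := congrArg f h1
      simp only [map_add, map_mul, map_zero] at e
      simp only [hf] at e
      rwa [ha, hb, hc, hd, kx4, ky4, kz4] at e
    refine ⟨![a, b, c, d], ?_, ?_⟩
    · intro h0
      exact hne ⟨by simpa using congrFun h0 0, by simpa using congrFun h0 1,
        by simpa using congrFun h0 2, by simpa using congrFun h0 3⟩
    · funext i
      fin_cases i
      · simp only [Matrix.mulVec, dotProduct, Fin.sum_univ_four]
        simp [Matrix.vecHead, Matrix.vecTail]
        linear_combination h1
      · simp only [Matrix.mulVec, dotProduct, Fin.sum_univ_four]
        simp [Matrix.vecHead, Matrix.vecTail]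
        linear_combination h2
      · simp only [Matrix.mulVec, dotProduct, Fin.sum_univ_four]
        simp [Matrix.vecHead, Matrix.vecTail]
        linear_combination h3
      · simp only [Matrix.mulVec, dotProduct, Fin.sum_univ_four]
        simp [Matrix.vecHead, Matrix.vecTail]
        linear_combination h4
  · rintro ⟨v, hv0, hMv⟩
    set a := v 0 with hav
    set b := v 1 with hbv
    set c := v 2 with hcv
    set d := v 3 with hdv
    have e0 : a * x ^ 4 + b * y ^ 4 + c * z ^ 4 + d = 0 := by
      have h := congrFun hMv 0
      simp [Matrix.mulVec, dotProduct, Fin.sum_univ_four] at h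
      linear_combination h
    have e1 : a * x ^ 5 + b * y ^ 5 + c * z ^ 5 + d = 0 := by
      have h := congrFun hMv 1
      simp [Matrix.mulVec, dotProduct, Fin.sum_univ_four] at h
      linear_combination h
    have e2 : a * (x ^ 5)⁻¹ + b * (y ^ 5)⁻¹ + c * (z ^ 5)⁻¹ + d = 0 := by
      have h := congrFun hMv 2
      simp [Matrix.mulVec, dotProduct, Fin.sum_univ_four] at h
      linear_combination h
    have e3 : a * (x ^ 4)⁻¹ + b * (y ^ 4)⁻¹ + c * (z ^ 4)⁻¹ + d = 0 := by
      have h := congrFun hMv 3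
      simp [Matrix.mulVec, dotProduct, Fin.sum_univ_four] at h
      linear_combination h
    -- conjugated vector equations
    have f0 : a ^ q * x ^ 4 + b ^ q * y ^ 4 + c ^ q * z ^ 4 + d ^ q = 0 := by
      have e := congrArg f e3
      simp only [map_add, map_mul, map_zero] at e
      simp only [hf] at e
      rwa [kx4', ky4', kz4'] at e
    have f1 : a ^ q * x ^ 5 + b ^ q * y ^ 5 + c ^ q * z ^ 5 + d ^ q = 0 := by
      have e := congrArg f e2
      simp only [map_add, map_mul, map_zero] at e
      simp only [hf] at e
      rwa [kx5', ky5', kz5'] at e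
    by_cases hall : ∀ j : Fin 4, v j + (v j) ^ q = 0
    · -- v^q = -v componentwise; rescale by (c₀ - c₀^q)
      have hc0 : ∃ c₀ : E, c₀ ^ q ≠ c₀ := by
        by_cases hxx : x ^ q = x
        · have hx2 : x * x = 1 := by
            have h := hx; rw [pow_succ, hxx] at h; exact h
          have hxneg : x = -1 := by
            rcases mul_self_eq_one_iff.mp hx2 with h | h
            · exact absurd h hx1
            · exact h
          refine ⟨y, fun hyy => ?_⟩
          have hy2 : y * y = 1 := by
            have h := hy; rw [pow_succ, hyy] at h; exact h
          rcases mul_self_eq_one_iff.mp hy2 with h | h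
          · exact hy1 h
          · exact hxy (hxneg.trans h.symm)
        · exact ⟨x, hxx⟩
      obtain ⟨c₀, hc₀⟩ := hc0
      set l : E := c₀ - c₀ ^ q with hl
      have hl0 : l ≠ 0 := sub_ne_zero.mpr (Ne.symm hc₀)
      have hlq : l ^ q = -l := by
        have e : f l = f c₀ - f (c₀ ^ q) := by rw [hl, map_sub]
        simp only [hf] at e
        rw [hqq] at e
        rw [e, hl]; ring
      have hneg : ∀ j : Fin 4, (v j) ^ q = -(v j) := by
        intro j
        have h := hall j
        linear_combination h
      refine ⟨l * a, l * b, l * c, l * d, ?_, ?_, ?_, ?_, ?_, ?_, ?_⟩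
      · rw [mul_pow, hlq, show a ^ q = -a from hneg 0]; ring
      · rw [mul_pow, hlq, show b ^ q = -b from hneg 1]; ring
      · rw [mul_pow, hlq, show c ^ q = -c from hneg 2]; ring
      · rw [mul_pow, hlq, show d ^ q = -d from hneg 3]; ring
      · rintro ⟨g0, g1, g2, g3⟩
        apply hv0
        funext j
        fin_cases j
        · exact (mul_eq_zero.mp g0).resolve_left hl0
        · exact (mul_eq_zero.mp g1).resolve_left hl0
        · exact (mul_eq_zero.mp g2).resolve_left hl0
        · exact (mul_eq_zero.mp g3).resolve_left hl0
      · linear_combination l * e0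
      · linear_combination l * e1
    · push_neg at hall
      obtain ⟨j, hj⟩ := hall
      refine ⟨a + a ^ q, b + b ^ q, c + c ^ q, d + d ^ q, ?_, ?_, ?_, ?_, ?_, ?_, ?_⟩
      · have e : f (a + a ^ q) = f a + f (a ^ q) := map_add f a (a ^ q)
        simp only [hf] at e
        rw [hqq] at e
        exact e.trans (add_comm _ _)
      · have e : f (b + b ^ q) = f b + f (b ^ q) := map_add f b (b ^ q)
        simp only [hf] at e
        rw [hqq] at e
        exact e.trans (add_comm _ _)
      · have e : f (c + c ^ q) = f c + f (c ^ q) := map_add f c (c ^ q)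
        simp only [hf] at e
        rw [hqq] at e
        exact e.trans (add_comm _ _)
      · have e : f (d + d ^ q) = f d + f (d ^ q) := map_add f d (d ^ q)
        simp only [hf] at e
        rw [hqq] at e
        exact e.trans (add_comm _ _)
      · rintro ⟨g0, g1, g2, g3⟩
        fin_cases j
        · exact hj g0
        · exact hj g1
        · exact hj g2
        · exact hj g3
      · linear_combination e0 + f0
      · linear_combination e1 + f1
end
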